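/- arXiv:1010.0817 — 6 statements merged into one kernel-verified Lean document; each statement's English description precedes it below -/
import Mathlib

section
/- Let n, m ≥ 1 and let f, g be measurable functions on ℝ^n × ℝ^m. Then ‖f·g‖_{L¹(ℝ^{n+m})} ≤ ‖f‖_X · ‖g‖_{X*}. -/
open MeasureTheory ENNReal Real

noncomputable section

/-- Points of the waveguide ambient space `ℝ^n × ℝ^m`. -/
abbrev Pt (n m : ℕ) := EuclideanSpace ℝ (Fin n) × EuclideanSpace ℝ (Fin m)

variable {n m : ℕ}

/-- `L²` norm over a subset of `ℝ^{n+m}`. -/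
def L2 {F : Type*} [NormedAddCommGroup F] (f : Pt n m → F) (S : Set (Pt n m)) : ℝ≥0∞ :=
  eLpNorm f 2 (volume.restrict S)

/-- Morrey–Campanato norm `‖f‖_X = sup_{R>0} R^{-1/2} ‖f‖_{L²(|x|≤R)}`. -/
def normX {F : Type*} [NormedAddCommGroup F] (f : Pt n m → F) : ℝ≥0∞ :=
  ⨆ (R : ℝ) (_ : 0 < R), ENNReal.ofReal (R ^ (-(1:ℝ)/2)) * L2 f {p : Pt n m | ‖p.1‖ ≤ R}

/-- Morrey–Campanato norm `‖f‖_{X₁} = sup_{R>0} R^{-3/2} ‖f‖_{L²(|x|≤R)}`. -/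
def normX1 {F : Type*} [NormedAddCommGroup F] (f : Pt n m → F) : ℝ≥0∞ :=
  ⨆ (R : ℝ) (_ : 0 < R), ENNReal.ofReal (R ^ (-(3:ℝ)/2)) * L2 f {p : Pt n m | ‖p.1‖ ≤ R}

/-- Dual Morrey–Campanato norm
`‖f‖_{X*} = Σ_{j∈ℤ} 2^{j/2} ‖f‖_{L²(2^{j-1}≤|x|≤2^j)}`. -/
def normXstar {F : Type*} [NormedAddCommGroup F] (f : Pt n m → F) : ℝ≥0∞ :=
  ∑' j : ℤ, ENNReal.ofReal ((2:ℝ) ^ ((j:ℝ)/2)) *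
    L2 f {p : Pt n m | (2:ℝ)^(j-1) ≤ ‖p.1‖ ∧ ‖p.1‖ ≤ (2:ℝ)^j}

/-- Standard basis vector in the `x` variables. -/
def ex (n m : ℕ) (i : Fin n) : Pt n m := (EuclideanSpace.single i 1, 0)

/-- Standard basis vector in the `y` variables. -/
def ey (n m : ℕ) (i : Fin m) : Pt n m := (0, EuclideanSpace.single i 1)

/-- Laplacian in all `n+m` variables. -/
def lap (u : Pt n m → ℂ) (p : Pt n m) : ℂ :=
  (∑ i : Fin n, fderiv ℝ (fun q => fderiv ℝ u q (ex n m i)) p (ex n m i)) +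
  ∑ i : Fin m, fderiv ℝ (fun q => fderiv ℝ u q (ey n m i)) p (ey n m i)

/-- Pointwise euclidean norm of the gradient in the `x` variables only. -/
def gradXnorm (u : Pt n m → ℂ) (p : Pt n m) : ℝ :=
  Real.sqrt (∑ i : Fin n, ‖fderiv ℝ u p (ex n m i)‖^2)

/-- Pointwise squared euclidean norm of the full gradient. -/
def gradNormSq (u : Pt n m → ℂ) (p : Pt n m) : ℝ :=
  (∑ i : Fin n, ‖fderiv ℝ u p (ex n m i)‖^2) +
  ∑ i : Fin m, ‖fderiv ℝ u p (ey n m i)‖^2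

/-- The right hand side `f := -Δu - (λ+iε)u + Vu` of the resolvent equation. -/
def resf (V : Pt n m → ℝ) (lam eps : ℝ) (u : Pt n m → ℂ) : Pt n m → ℂ :=
  fun p => -lap u p - (lam + eps * Complex.I) * u p + (V p : ℂ) * u p

/-- A repulsive potential: nonnegative, continuous, `C¹` in `x` for `x ≠ 0`, and
`x·∇ₓ(|x| V) ≤ 0` for `x ≠ 0`. -/
structure IsRepulsive (V : Pt n m → ℝ) : Prop where
  nonneg : ∀ p, 0 ≤ V p
  continuous : Continuous V
  cdiff : ∀ y : EuclideanSpace ℝ (Fin m), ContDiffOn ℝ 1 (fun x => V (x, y)) {x | x ≠ 0}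
  repulsive : ∀ (x : EuclideanSpace ℝ (Fin n)) (y : EuclideanSpace ℝ (Fin m)), x ≠ 0 →
    fderiv ℝ (fun x' : EuclideanSpace ℝ (Fin n) => ‖x'‖ * V (x', y)) x x ≤ 0

/-- `‖fg‖_{L¹} ≤ ‖f‖_X ‖g‖_{X*}`. -/
theorem X_Xstar_holder (n m : ℕ) (hn : 1 ≤ n) (hm : 1 ≤ m)
    (f g : Pt n m → ℂ) (hf : Measurable f) (hg : Measurable g) :
    eLpNorm (fun p => f p * g p) 1 volume ≤ normX f * normXstar g := by
  classical
  set A : ℤ → Set (Pt n m) :=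
    fun j => {p : Pt n m | (2:ℝ)^(j-1) ≤ ‖p.1‖ ∧ ‖p.1‖ ≤ (2:ℝ)^j} with hA
  -- the set where x = 0 is null
  have hnull : (volume : Measure (Pt n m)) {p : Pt n m | p.1 = 0} = 0 := by
    haveI : Nontrivial (EuclideanSpace ℝ (Fin n)) :=
      Module.nontrivial_of_finrank_pos (R := ℝ) (by rw [finrank_euclideanSpace_fin]; omega)
    have hset : {p : Pt n m | p.1 = 0} =
        ({0} : Set (EuclideanSpace ℝ (Fin n))) ×ˢ (Set.univ : Set (EuclideanSpace ℝ (Fin m))) := by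
      ext ⟨x,y⟩; simp [Set.mem_prod, eq_comm]
    rw [hset, MeasureTheory.Measure.volume_eq_prod, Measure.prod_prod, measure_singleton, zero_mul]
  -- the annuli cover {x ≠ 0}
  have hcover : {p : Pt n m | p.1 ≠ 0} ⊆ ⋃ j : ℤ, A j := by
    intro p hp
    have hr : 0 < ‖p.1‖ := norm_pos_iff.mpr hp
    refine Set.mem_iUnion.mpr ⟨⌈Real.logb 2 ‖p.1‖⌉, ?_, ?_⟩
    · have h1 : ((⌈Real.logb 2 ‖p.1‖⌉ - 1 : ℤ) : ℝ) ≤ Real.logb 2 ‖p.1‖ := by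
        push_cast; linarith [Int.ceil_lt_add_one (Real.logb 2 ‖p.1‖)]
      calc (2:ℝ) ^ (⌈Real.logb 2 ‖p.1‖⌉ - 1)
          = (2:ℝ) ^ ((⌈Real.logb 2 ‖p.1‖⌉ - 1 : ℤ) : ℝ) := (Real.rpow_intCast 2 _).symm
        _ ≤ (2:ℝ) ^ (Real.logb 2 ‖p.1‖) := Real.rpow_le_rpow_of_exponent_le one_le_two h1
        _ = ‖p.1‖ := Real.rpow_logb two_pos (by norm_num) hr
    · have h2 : Real.logb 2 ‖p.1‖ ≤ ((⌈Real.logb 2 ‖p.1‖⌉ : ℤ) : ℝ) := Int.le_ceil _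
      calc ‖p.1‖ = (2:ℝ) ^ (Real.logb 2 ‖p.1‖) := (Real.rpow_logb two_pos (by norm_num) hr).symm
        _ ≤ (2:ℝ) ^ ((⌈Real.logb 2 ‖p.1‖⌉ : ℤ) : ℝ) := Real.rpow_le_rpow_of_exponent_le one_le_two h2
        _ = (2:ℝ) ^ ⌈Real.logb 2 ‖p.1‖⌉ := Real.rpow_intCast 2 _
  -- the key per-annulus bound
  have key : ∀ j : ℤ, (∫⁻ p in A j, ‖f p * g p‖₊ ∂volume) ≤
      normX f * (ENNReal.ofReal ((2:ℝ) ^ ((j:ℝ)/2)) * L2 g (A j)) := by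
    intro j
    have hR : (0:ℝ) < (2:ℝ)^j := zpow_pos two_pos j
    -- Hölder on the annulus
    have hold : (∫⁻ p in A j, ‖f p * g p‖₊ ∂volume) ≤ L2 f (A j) * L2 g (A j) := by
      have h := eLpNorm_smul_le_mul_eLpNorm (μ := volume.restrict (A j))
        (p := 2) (q := 2) (r := 1) (f := g) (φ := f)
        hg.aestronglyMeasurable hf.aestronglyMeasurable
      rw [eLpNorm_one_eq_lintegral_enorm] at h
      simpa [Pi.smul_apply, smul_eq_mul, L2, enorm_eq_nnnorm] using h
    have hmono : L2 f (A j) ≤ L2 f {p : Pt n m | ‖p.1‖ ≤ (2:ℝ)^j} :=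
      eLpNorm_mono_measure _ (Measure.restrict_mono (fun p hp => hp.2) le_rfl)
    have hX : ENNReal.ofReal (((2:ℝ)^j) ^ (-(1:ℝ)/2)) *
        L2 f {p : Pt n m | ‖p.1‖ ≤ (2:ℝ)^j} ≤ normX f :=
      le_iSup₂ (f := fun R (_ : 0 < R) =>
        ENNReal.ofReal (R ^ (-(1:ℝ)/2)) * L2 f {p : Pt n m | ‖p.1‖ ≤ R}) ((2:ℝ)^j) hR
    have hprod : ENNReal.ofReal (((2:ℝ)^j) ^ ((1:ℝ)/2)) *
        ENNReal.ofReal (((2:ℝ)^j) ^ (-(1:ℝ)/2)) = 1 := by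
      rw [← ENNReal.ofReal_mul (by positivity), ← Real.rpow_add hR]
      norm_num
    have hball : L2 f {p : Pt n m | ‖p.1‖ ≤ (2:ℝ)^j} ≤
        ENNReal.ofReal (((2:ℝ)^j) ^ ((1:ℝ)/2)) * normX f := by
      calc L2 f {p : Pt n m | ‖p.1‖ ≤ (2:ℝ)^j}
          = (ENNReal.ofReal (((2:ℝ)^j) ^ ((1:ℝ)/2)) * ENNReal.ofReal (((2:ℝ)^j) ^ (-(1:ℝ)/2))) *
            L2 f {p : Pt n m | ‖p.1‖ ≤ (2:ℝ)^j} := by rw [hprod, one_mul]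
        _ = ENNReal.ofReal (((2:ℝ)^j) ^ ((1:ℝ)/2)) *
            (ENNReal.ofReal (((2:ℝ)^j) ^ (-(1:ℝ)/2)) *
              L2 f {p : Pt n m | ‖p.1‖ ≤ (2:ℝ)^j}) := by ring
        _ ≤ ENNReal.ofReal (((2:ℝ)^j) ^ ((1:ℝ)/2)) * normX f := mul_le_mul_right hX _
    have hexp : (((2:ℝ)^j) ^ ((1:ℝ)/2)) = (2:ℝ)^((j:ℝ)/2) := by
      rw [← Real.rpow_intCast 2 j, ← Real.rpow_mul (by norm_num), mul_one_div]
    calc (∫⁻ p in A j, ‖f p * g p‖₊ ∂volume) ≤ L2 f (A j) * L2 g (A j) := hold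
      _ ≤ (ENNReal.ofReal ((2:ℝ)^((j:ℝ)/2)) * normX f) * L2 g (A j) := by
          refine mul_le_mul_left (hmono.trans ?_) _
          rw [← hexp]; exact hball
      _ = normX f * (ENNReal.ofReal ((2:ℝ)^((j:ℝ)/2)) * L2 g (A j)) := by ring
  -- assemble
  calc eLpNorm (fun p => f p * g p) 1 volume
      = ∫⁻ p, ‖f p * g p‖₊ ∂volume := eLpNorm_one_eq_lintegral_enorm
    _ = ∫⁻ p in {p : Pt n m | p.1 ≠ 0}, ‖f p * g p‖₊ ∂volume := by
        rw [← setLIntegral_univ]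
        refine (setLIntegral_congr ?_).symm
        rw [ae_eq_univ]
        have hc : {p : Pt n m | p.1 ≠ 0}ᶜ = {p : Pt n m | p.1 = 0} := by ext p; simp
        rw [hc]; exact hnull
    _ ≤ ∫⁻ p in ⋃ j : ℤ, A j, ‖f p * g p‖₊ ∂volume := lintegral_mono_set hcover
    _ ≤ ∑' j : ℤ, ∫⁻ p in A j, ‖f p * g p‖₊ ∂volume := lintegral_iUnion_le _ _
    _ ≤ ∑' j : ℤ, normX f * (ENNReal.ofReal ((2:ℝ)^((j:ℝ)/2)) * L2 g (A j)) :=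
        ENNReal.tsum_le_tsum key
    _ = normX f * normXstar g := by rw [ENNReal.tsum_mul_left]; rfl
end
end

section
/- Let n, m ≥ 1 and let f, g, h be measurable functions on ℝ^n × ℝ^m. Then ‖f·g·h‖_{L¹(ℝ^{n+m})} ≤ 2·‖f‖_{X₁}·‖g‖_{X*}·‖ |x|·h ‖_{L^∞}, where |x| denotes the norm of the x-component. In particular, taking h to be the indicator function of {|x| ≤ R}, ‖f·g‖_{L¹({(x,y) : |x| ≤ R})} ≤ 2·R·‖f‖_{X₁}·‖g‖_{X*} for every R > 0. -/
open MeasureTheory ENNReal Real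

noncomputable section

variable {n m : ℕ}

/-! ### Auxiliary lemmas -/

private lemma aux_rpow_calc (j : ℤ) :
    ((2:ℝ)^(j-1))⁻¹ * ((2:ℝ)^j)^((3:ℝ)/2) = 2 * (2:ℝ)^((j:ℝ)/2) := by
  have h2 : (0:ℝ) < 2 := two_pos
  have e1 : ((2:ℝ)^(j-1))⁻¹ = (2:ℝ)^(-((j:ℝ)-1)) := by
    rw [← Real.rpow_intCast 2 (j-1), ← Real.rpow_neg h2.le]; push_cast; ring_nf
  have e2 : ((2:ℝ)^j)^((3:ℝ)/2) = (2:ℝ)^((j:ℝ)*(3/2)) := by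
    rw [← Real.rpow_intCast 2 j, ← Real.rpow_mul h2.le]
  rw [e1, e2, ← Real.rpow_add h2]
  have : -((j:ℝ)-1) + (j:ℝ)*(3/2) = 1 + (j:ℝ)/2 := by ring
  rw [this, Real.rpow_add h2, Real.rpow_one]

private lemma aux_holder (μ : Measure (Pt n m)) (f g : Pt n m → ℂ)
    (hf : Measurable f) (hg : Measurable g) :
    ∫⁻ p, (‖f p‖₊ : ℝ≥0∞) * ‖g p‖₊ ∂μ ≤ eLpNorm f 2 μ * eLpNorm g 2 μ := by
  have hc : (2:ℝ).HolderConjugate 2 := Real.holderConjugate_iff.mpr ⟨one_lt_two, by norm_num⟩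
  have := ENNReal.lintegral_mul_le_Lp_mul_Lq μ hc
    (f := fun p => (‖f p‖₊ : ℝ≥0∞)) (g := fun p => (‖g p‖₊ : ℝ≥0∞))
    (hf.nnnorm.coe_nnreal_ennreal).aemeasurable (hg.nnnorm.coe_nnreal_ennreal).aemeasurable
  rw [eLpNorm_eq_lintegral_rpow_enorm_toReal (by norm_num) (by norm_num),
    eLpNorm_eq_lintegral_rpow_enorm_toReal (by norm_num) (by norm_num)]
  simp only [ENNReal.toReal_ofNat]
  exact this

private lemma aux_L2_le_normX1 (u : Pt n m → ℂ) {R : ℝ} (hR : 0 < R) :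
    L2 u {p : Pt n m | ‖p.1‖ ≤ R} ≤ ENNReal.ofReal (R ^ ((3:ℝ)/2)) * normX1 u := by
  have h : ENNReal.ofReal (R ^ (-(3:ℝ)/2)) * L2 u {p : Pt n m | ‖p.1‖ ≤ R} ≤ normX1 u :=
    le_iSup₂ (f := fun (R : ℝ) (_ : 0 < R) =>
      ENNReal.ofReal (R ^ (-(3:ℝ)/2)) * L2 u {p : Pt n m | ‖p.1‖ ≤ R}) R hR
  have key : ENNReal.ofReal (R ^ ((3:ℝ)/2)) * ENNReal.ofReal (R ^ (-(3:ℝ)/2)) = 1 := by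
    rw [← ENNReal.ofReal_mul (by positivity), ← Real.rpow_add hR]
    norm_num
  calc L2 u {p : Pt n m | ‖p.1‖ ≤ R}
      = (ENNReal.ofReal (R ^ ((3:ℝ)/2)) * ENNReal.ofReal (R ^ (-(3:ℝ)/2)))
        * L2 u {p : Pt n m | ‖p.1‖ ≤ R} := by rw [key, one_mul]
    _ = ENNReal.ofReal (R ^ ((3:ℝ)/2))
        * (ENNReal.ofReal (R ^ (-(3:ℝ)/2)) * L2 u {p : Pt n m | ‖p.1‖ ≤ R}) := by ring
    _ ≤ _ := mul_le_mul_right h _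

private lemma aux_part1 (n m : ℕ) (hn : 1 ≤ n)
    (f g h : Pt n m → ℂ) (hf : Measurable f) (hg : Measurable g) (hh : Measurable h) :
    eLpNorm (fun p => f p * g p * h p) 1 volume ≤
      2 * normX1 f * normXstar g * eLpNorm (fun p : Pt n m => ‖p.1‖ • h p) ⊤ volume := by
  set M : ℝ≥0∞ := eLpNorm (fun p : Pt n m => ‖p.1‖ • h p) ⊤ volume with hMdef
  set A : ℤ → Set (Pt n m) :=
    fun j => {p : Pt n m | (2:ℝ)^(j-1) ≤ ‖p.1‖ ∧ ‖p.1‖ ≤ (2:ℝ)^j} with hAdef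
  have hAm : ∀ j, MeasurableSet (A j) := fun j =>
    (measurableSet_le measurable_const (measurable_fst.norm)).inter
      (measurableSet_le measurable_fst.norm measurable_const)
  set T : Set (Pt n m) := {p : Pt n m | p.1 = 0} with hTdef
  have hT : MeasurableSet T := measurable_fst (measurableSet_singleton 0)
  have : Nontrivial (EuclideanSpace ℝ (Fin n)) := ⟨0, EuclideanSpace.single ⟨0, hn⟩ 1, by
    intro hh'; have := congrArg (fun v => v ⟨0, hn⟩) hh'.symm; simp at this⟩
  have hT0 : volume T = 0 := by
    have h1 : T = ({0} : Set (EuclideanSpace ℝ (Fin n))) ×ˢ (Set.univ) := by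
      ext ⟨x, y⟩; simp [hTdef, eq_comm]
    rw [h1, Measure.volume_eq_prod, Measure.prod_prod]
    simp
  have hcover : Tᶜ ⊆ ⋃ j, A j := by
    intro p hp
    have hp0 : 0 < ‖p.1‖ := norm_pos_iff.2 hp
    obtain ⟨k, hk1, hk2⟩ := exists_mem_Ico_zpow hp0 one_lt_two
    refine Set.mem_iUnion.2 ⟨k + 1, ⟨?_, hk2.le⟩⟩
    simpa using hk1
  have hae : ∀ᵐ p ∂(volume : Measure (Pt n m)),
      (‖h p‖₊ : ℝ≥0∞) * ENNReal.ofReal ‖p.1‖ ≤ M := by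
    have h1 := ae_le_eLpNormEssSup (f := fun p : Pt n m => ‖p.1‖ • h p) (μ := volume)
    rw [hMdef, eLpNorm_exponent_top]
    filter_upwards [h1] with p hp
    simp only [enorm_smul] at hp
    rw [← Real.enorm_eq_ofReal (norm_nonneg _), mul_comm]
    exact hp
  have hj : ∀ j : ℤ, (∫⁻ p in A j, (‖f p‖₊ * ‖g p‖₊ * ‖h p‖₊ : ℝ≥0∞) ∂volume) ≤
      (2 * normX1 f * M) * (ENNReal.ofReal ((2:ℝ)^((j:ℝ)/2)) * L2 g (A j)) := by
    intro j
    have h2pos : (0:ℝ) < (2:ℝ)^(j-1) := zpow_pos two_pos _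
    set c : ℝ≥0∞ := M / ENNReal.ofReal ((2:ℝ)^(j-1)) with hc
    have hbound : ∀ᵐ p ∂(volume.restrict (A j)),
        (‖f p‖₊ * ‖g p‖₊ * ‖h p‖₊ : ℝ≥0∞) ≤ c * ((‖f p‖₊ : ℝ≥0∞) * ‖g p‖₊) := by
      filter_upwards [ae_restrict_of_ae hae, ae_restrict_mem (hAm j)] with p hp hmem
      have h1 : ENNReal.ofReal ((2:ℝ)^(j-1)) ≤ ENNReal.ofReal ‖p.1‖ :=
        ENNReal.ofReal_le_ofReal hmem.1
      have h2 : (‖h p‖₊ : ℝ≥0∞) * ENNReal.ofReal ((2:ℝ)^(j-1)) ≤ M :=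
        le_trans (mul_le_mul_right h1 _) hp
      have h3 : (‖h p‖₊ : ℝ≥0∞) ≤ c :=
        (ENNReal.le_div_iff_mul_le
          (Or.inl ((ENNReal.ofReal_pos.2 h2pos).ne'))
          (Or.inl ENNReal.ofReal_ne_top)).2 h2
      calc ((‖f p‖₊ : ℝ≥0∞) * ‖g p‖₊) * ‖h p‖₊
          ≤ ((‖f p‖₊ : ℝ≥0∞) * ‖g p‖₊) * c := mul_le_mul_right h3 _
        _ = c * ((‖f p‖₊ : ℝ≥0∞) * ‖g p‖₊) := mul_comm _ _
    have hL2f : eLpNorm f 2 (volume.restrict (A j)) ≤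
        ENNReal.ofReal (((2:ℝ)^j) ^ ((3:ℝ)/2)) * normX1 f := by
      have hsub : A j ⊆ {p : Pt n m | ‖p.1‖ ≤ (2:ℝ)^j} := fun p hp => hp.2
      exact le_trans (eLpNorm_mono_measure f (Measure.restrict_mono hsub le_rfl))
        (aux_L2_le_normX1 f (zpow_pos two_pos j))
    have hkey : (ENNReal.ofReal ((2:ℝ)^(j-1)))⁻¹ * ENNReal.ofReal (((2:ℝ)^j)^((3:ℝ)/2))
        = 2 * ENNReal.ofReal ((2:ℝ)^((j:ℝ)/2)) := by
      rw [← ENNReal.ofReal_inv_of_pos h2pos, ← ENNReal.ofReal_mul (by positivity),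
        aux_rpow_calc, ENNReal.ofReal_mul (by norm_num), ENNReal.ofReal_ofNat]
    calc (∫⁻ p in A j, (‖f p‖₊ * ‖g p‖₊ * ‖h p‖₊ : ℝ≥0∞) ∂volume)
        ≤ ∫⁻ p in A j, c * ((‖f p‖₊ : ℝ≥0∞) * ‖g p‖₊) ∂volume := lintegral_mono_ae hbound
      _ = c * ∫⁻ p in A j, (‖f p‖₊ : ℝ≥0∞) * ‖g p‖₊ ∂volume :=
          lintegral_const_mul c (hf.nnnorm.coe_nnreal_ennreal.mul hg.nnnorm.coe_nnreal_ennreal)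
      _ ≤ c * (eLpNorm f 2 (volume.restrict (A j)) * eLpNorm g 2 (volume.restrict (A j))) :=
          mul_le_mul_right (aux_holder _ f g hf hg) _
      _ ≤ c * ((ENNReal.ofReal (((2:ℝ)^j) ^ ((3:ℝ)/2)) * normX1 f) * L2 g (A j)) :=
          mul_le_mul_right (mul_le_mul_left hL2f _) _
      _ = (M * ((ENNReal.ofReal ((2:ℝ)^(j-1)))⁻¹ * ENNReal.ofReal (((2:ℝ)^j)^((3:ℝ)/2))))
          * (normX1 f * L2 g (A j)) := by
          rw [hc, div_eq_mul_inv]; ring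
      _ = (2 * normX1 f * M) * (ENNReal.ofReal ((2:ℝ)^((j:ℝ)/2)) * L2 g (A j)) := by
          rw [hkey]; ring
  calc eLpNorm (fun p => f p * g p * h p) 1 volume
      = ∫⁻ p, (‖f p‖₊ * ‖g p‖₊ * ‖h p‖₊ : ℝ≥0∞) ∂volume := by
        rw [eLpNorm_one_eq_lintegral_enorm]
        exact lintegral_congr fun p => by simp [nnnorm_mul]; rfl
    _ = (∫⁻ p in T, (‖f p‖₊ * ‖g p‖₊ * ‖h p‖₊ : ℝ≥0∞) ∂volume)
        + ∫⁻ p in Tᶜ, (‖f p‖₊ * ‖g p‖₊ * ‖h p‖₊ : ℝ≥0∞) ∂volume :=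
        (lintegral_add_compl _ hT).symm
    _ = ∫⁻ p in Tᶜ, (‖f p‖₊ * ‖g p‖₊ * ‖h p‖₊ : ℝ≥0∞) ∂volume := by
        rw [setLIntegral_measure_zero _ _ hT0, zero_add]
    _ ≤ ∫⁻ p in ⋃ j, A j, (‖f p‖₊ * ‖g p‖₊ * ‖h p‖₊ : ℝ≥0∞) ∂volume :=
        lintegral_mono_set hcover
    _ ≤ ∑' j : ℤ, ∫⁻ p in A j, (‖f p‖₊ * ‖g p‖₊ * ‖h p‖₊ : ℝ≥0∞) ∂volume :=
        lintegral_iUnion_le _ _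
    _ ≤ ∑' j : ℤ, (2 * normX1 f * M) * (ENNReal.ofReal ((2:ℝ)^((j:ℝ)/2)) * L2 g (A j)) :=
        ENNReal.tsum_le_tsum hj
    _ = (2 * normX1 f * M) * normXstar g := by rw [ENNReal.tsum_mul_left]; rfl
    _ = 2 * normX1 f * normXstar g * M := by ring

/-- `‖fgh‖_{L¹} ≤ 2 ‖f‖_{X₁} ‖g‖_{X*} ‖|x|h‖_{L^∞}`, and in
particular `‖fg‖_{L¹(|x|≤R)} ≤ 2R ‖f‖_{X₁} ‖g‖_{X*}`. -/
theorem X1_Xstar_weighted (n m : ℕ) (hn : 1 ≤ n) (hm : 1 ≤ m)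
    (f g h : Pt n m → ℂ) (hf : Measurable f) (hg : Measurable g) (hh : Measurable h) :
    eLpNorm (fun p => f p * g p * h p) 1 volume ≤
      2 * normX1 f * normXstar g * eLpNorm (fun p : Pt n m => ‖p.1‖ • h p) ⊤ volume
    ∧ ∀ R : ℝ, 0 < R →
        eLpNorm (fun p => f p * g p) 1 (volume.restrict {p : Pt n m | ‖p.1‖ ≤ R}) ≤
          ENNReal.ofReal (2 * R) * normX1 f * normXstar g := by
  have part1 := aux_part1 n m hn f g h hf hg hh
  refine ⟨part1, fun R hR => ?_⟩
  set S : Set (Pt n m) := {p : Pt n m | ‖p.1‖ ≤ R} with hSdef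
  have hSm : MeasurableSet S := measurableSet_le measurable_fst.norm measurable_const
  set h' : Pt n m → ℂ := S.indicator (fun _ => 1) with hh'def
  have hh' : Measurable h' := measurable_const.indicator hSm
  have key := aux_part1 n m hn f g h' hf hg hh'
  have heq : eLpNorm (fun p => f p * g p) 1 (volume.restrict S)
      = eLpNorm (fun p => f p * g p * h' p) 1 volume := by
    rw [eLpNorm_one_eq_lintegral_enorm, eLpNorm_one_eq_lintegral_enorm,
      ← lintegral_indicator hSm]
    refine lintegral_congr fun p => ?_
    by_cases hp : p ∈ S
    · simp [hh'def, Set.indicator_of_mem hp]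
    · simp [hh'def, Set.indicator_of_notMem hp]
  have hMle : eLpNorm (fun p : Pt n m => ‖p.1‖ • h' p) ⊤ volume ≤ ENNReal.ofReal R := by
    rw [eLpNorm_exponent_top]
    refine eLpNormEssSup_le_of_ae_bound (C := R) (Filter.Eventually.of_forall fun p => ?_)
    by_cases hp : p ∈ S
    · simpa [hh'def, Set.indicator_of_mem hp, norm_smul,
        Real.norm_of_nonneg (norm_nonneg _)] using (show ‖p.1‖ ≤ R from hp)
    · simp [hh'def, Set.indicator_of_notMem hp, hR.le]
  calc eLpNorm (fun p => f p * g p) 1 (volume.restrict S)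
      = eLpNorm (fun p => f p * g p * h' p) 1 volume := heq
    _ ≤ 2 * normX1 f * normXstar g
        * eLpNorm (fun p : Pt n m => ‖p.1‖ • h' p) ⊤ volume := key
    _ ≤ 2 * normX1 f * normXstar g * ENNReal.ofReal R := mul_le_mul_right hMle _
    _ = ENNReal.ofReal (2 * R) * normX1 f * normXstar g := by
        rw [ENNReal.ofReal_mul (by norm_num), ENNReal.ofReal_ofNat]; ring
end
end

section
/- Let n, m ≥ 1, let u be a measurable function on ℝ^n × ℝ^m, and let s > 0, R > 0. Then ∫_{ℝ^{n+m}} (R + |x|²/R)^{-s} |u(x,y)|² dx dy ≤ (2^{4s}/(2^s − 1)) · sup_{ρ>0} ρ^{-s} ∫_{{|x|<ρ}} |u(x,y)|² dx dy, where the inner integral is over the set of (x,y) with |x| < ρ. -/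
open MeasureTheory ENNReal Real

noncomputable section

variable {n m : ℕ}

/-- the weight inequality (2.13) of the paper. -/
theorem weight_to_MC (n m : ℕ) (hn : 1 ≤ n) (hm : 1 ≤ m)
    (u : Pt n m → ℂ) (hu : Measurable u) (s R : ℝ) (hs : 0 < s) (hR : 0 < R) :
    (∫⁻ p : Pt n m,
        ENNReal.ofReal ((R + ‖p.1‖ ^ 2 / R) ^ (-s)) * (‖u p‖₊ : ℝ≥0∞) ^ 2) ≤
      ENNReal.ofReal ((2:ℝ) ^ (4 * s) / ((2:ℝ) ^ s - 1)) *
        ⨆ (ρ : ℝ) (_ : 0 < ρ), ENNReal.ofReal (ρ ^ (-s)) *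
          ∫⁻ p in {p : Pt n m | ‖p.1‖ < ρ}, (‖u p‖₊ : ℝ≥0∞) ^ 2 := by
  classical
  set g : Pt n m → ℝ≥0∞ := fun p => (‖u p‖₊ : ℝ≥0∞) ^ 2 with hgdef
  have hgmeas : Measurable g := hu.nnnorm.coe_nnreal_ennreal.pow_const 2
  set M : ℝ≥0∞ := ⨆ (ρ : ℝ) (_ : 0 < ρ), ENNReal.ofReal (ρ ^ (-s)) *
      ∫⁻ p in {p : Pt n m | ‖p.1‖ < ρ}, g p with hMdef
  -- ball bound
  have hball : ∀ ρ : ℝ, 0 < ρ →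
      (∫⁻ p in {p : Pt n m | ‖p.1‖ < ρ}, g p) ≤ ENNReal.ofReal (ρ ^ s) * M := by
    intro ρ hρ
    have h1 : ENNReal.ofReal (ρ ^ (-s)) * ∫⁻ p in {p : Pt n m | ‖p.1‖ < ρ}, g p ≤ M :=
      le_iSup_of_le ρ (le_iSup_of_le hρ le_rfl)
    calc (∫⁻ p in {p : Pt n m | ‖p.1‖ < ρ}, g p)
        = ENNReal.ofReal (ρ ^ s) *
            (ENNReal.ofReal (ρ ^ (-s)) * ∫⁻ p in {p : Pt n m | ‖p.1‖ < ρ}, g p) := by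
          rw [← mul_assoc, ← ENNReal.ofReal_mul (by positivity), ← Real.rpow_add hρ]
          simp
      _ ≤ ENNReal.ofReal (ρ ^ s) * M := mul_le_mul_right h1 _
  -- dyadic radii
  set c : ℕ → ℝ := fun j => Nat.casesOn j 0 (fun k => 2 ^ k * R) with hcdef
  have hc0 : c 0 = 0 := rfl
  have hcs : ∀ k, c (k + 1) = 2 ^ k * R := fun k => rfl
  have hcpos : ∀ k, 0 < c (k + 1) := fun k => by rw [hcs]; positivity
  have hcmono : StrictMono c := by
    apply strictMono_nat_of_lt_succ
    intro j
    cases j with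
    | zero => rw [hc0, hcs]; positivity
    | succ k =>
        rw [hcs, hcs, pow_succ]
        have := pow_pos (two_pos (α := ℝ)) k
        nlinarith
  -- annuli
  set S : ℕ → Set (Pt n m) := fun j => {p | c j ≤ ‖p.1‖ ∧ ‖p.1‖ < c (j + 1)} with hSdef
  have hnorm : Measurable fun p : Pt n m => ‖p.1‖ := (continuous_fst.norm).measurable
  have hSmeas : ∀ j, MeasurableSet (S j) := by
    intro j
    have : S j = (fun p : Pt n m => ‖p.1‖) ⁻¹' Set.Ico (c j) (c (j + 1)) := rfl
    rw [this]; exact hnorm measurableSet_Ico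
  have hSdisj : Pairwise (Function.onFun Disjoint S) := by
    intro i j hij
    rcases hij.lt_or_gt with h | h
    · refine Set.disjoint_left.mpr ?_
      rintro p ⟨hi1, hi2⟩ ⟨hj1, hj2⟩
      have : c (i + 1) ≤ c j := hcmono.monotone h
      linarith
    · refine Set.disjoint_right.mpr ?_
      rintro p ⟨hi1, hi2⟩ ⟨hj1, hj2⟩
      have : c (j + 1) ≤ c i := hcmono.monotone h
      linarith
  have hSunion : (⋃ j, S j) = Set.univ := by
    ext p
    simp only [Set.mem_iUnion, Set.mem_univ, iff_true]
    have ht : (0:ℝ) ≤ ‖p.1‖ := norm_nonneg _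
    have hex : ∃ k, ‖p.1‖ < c (k + 1) := by
      obtain ⟨k, hk⟩ := pow_unbounded_of_one_lt (‖p.1‖ / R) (one_lt_two (α := ℝ))
      rw [div_lt_iff₀ hR] at hk
      exact ⟨k, by rw [hcs]; linarith⟩
    refine ⟨Nat.find hex, ?_, Nat.find_spec hex⟩
    rcases Nat.eq_zero_or_pos (Nat.find hex) with h0 | h0
    · rw [h0, hc0]; exact ht
    · obtain ⟨k, hk⟩ := Nat.exists_eq_add_of_lt h0
      have hmin := Nat.find_min hex (m := k) (by omega)
      push_neg at hmin
      have : k + 1 = Nat.find hex := by omega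
      rwa [this] at hmin
  -- weight bounds
  set a : ℕ → ℝ := fun j => Nat.casesOn j (R ^ (-s)) (fun k => ((4:ℝ) ^ k * R) ^ (-s)) with hadef
  have ha_nonneg : ∀ j, 0 ≤ a j := by
    intro j; cases j with
    | zero => exact Real.rpow_nonneg hR.le _
    | succ k => exact Real.rpow_nonneg (by positivity) _
  have hwb : ∀ j, ∀ p ∈ S j,
      ENNReal.ofReal ((R + ‖p.1‖ ^ 2 / R) ^ (-s)) ≤ ENNReal.ofReal (a j) := by
    intro j p hp
    apply ENNReal.ofReal_le_ofReal
    cases j with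
    | zero =>
        exact Real.rpow_le_rpow_of_nonpos hR
          (le_add_of_nonneg_right (by positivity)) (by linarith)
    | succ k =>
        have hx : 2 ^ k * R ≤ ‖p.1‖ := by have := hp.1; rwa [hcs] at this
        have h4 : ((4:ℝ) ^ k) = 2 ^ k * 2 ^ k := by rw [← mul_pow]; norm_num
        have h1 : (4:ℝ) ^ k * R ≤ ‖p.1‖ ^ 2 / R := by
          rw [le_div_iff₀ hR]
          have h2 : (2 ^ k * R) ^ 2 ≤ ‖p.1‖ ^ 2 := by
            apply pow_le_pow_left₀ (by positivity) hx
          have h3 : (4:ℝ) ^ k * R * R = (2 ^ k * R) ^ 2 := by rw [h4]; ring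
          linarith
        exact Real.rpow_le_rpow_of_nonpos (by positivity)
          (le_trans h1 (le_add_of_nonneg_left hR.le)) (by linarith)
  -- per-annulus bound
  have hterm : ∀ j,
      (∫⁻ p in S j, ENNReal.ofReal ((R + ‖p.1‖ ^ 2 / R) ^ (-s)) * g p)
        ≤ ENNReal.ofReal (a j * (c (j + 1)) ^ s) * M := by
    intro j
    calc (∫⁻ p in S j, ENNReal.ofReal ((R + ‖p.1‖ ^ 2 / R) ^ (-s)) * g p)
        ≤ ∫⁻ p in S j, ENNReal.ofReal (a j) * g p :=
          setLIntegral_mono' (hSmeas j) fun p hp => mul_le_mul_left (hwb j p hp) _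
      _ = ENNReal.ofReal (a j) * ∫⁻ p in S j, g p := lintegral_const_mul _ hgmeas
      _ ≤ ENNReal.ofReal (a j) * ∫⁻ p in {p : Pt n m | ‖p.1‖ < c (j + 1)}, g p :=
          mul_le_mul_right (lintegral_mono_set fun p hp => hp.2) _
      _ ≤ ENNReal.ofReal (a j) * (ENNReal.ofReal ((c (j + 1)) ^ s) * M) :=
          mul_le_mul_right (hball _ (hcpos j)) _
      _ = ENNReal.ofReal (a j * (c (j + 1)) ^ s) * M := by
          rw [ENNReal.ofReal_mul (ha_nonneg j), mul_assoc]
  -- compute the coefficients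
  have hb0 : a 0 * (c (0 + 1)) ^ s = 1 := by
    show R ^ (-s) * ((2:ℝ) ^ 0 * R) ^ s = 1
    rw [pow_zero, one_mul, ← Real.rpow_add hR]
    simp
  have hbk : ∀ k : ℕ, a (k + 1) * (c (k + 2)) ^ s = (2:ℝ) ^ s * ((2:ℝ) ^ (-s)) ^ k := by
    intro k
    show ((4:ℝ) ^ k * R) ^ (-s) * ((2:ℝ) ^ (k + 1) * R) ^ s = _
    rw [Real.mul_rpow (by positivity) hR.le, Real.mul_rpow (by positivity) hR.le]
    have hRs : R ^ (-s) * R ^ s = 1 := by rw [← Real.rpow_add hR]; simp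
    have h4 : ((4:ℝ) ^ k) ^ (-s) = (2:ℝ) ^ ((2 * (k:ℝ)) * (-s)) := by
      rw [← Real.rpow_natCast (4:ℝ) k, ← Real.rpow_mul (by norm_num)]
      rw [show (4:ℝ) = (2:ℝ) ^ (2:ℝ) by norm_num [Real.rpow_natCast]]
      rw [← Real.rpow_mul two_pos.le]
      congr 1; ring
    have h2 : ((2:ℝ) ^ (k + 1)) ^ s = (2:ℝ) ^ (((k:ℝ) + 1) * s) := by
      rw [← Real.rpow_natCast (2:ℝ) (k + 1), ← Real.rpow_mul two_pos.le]
      push_cast; ring_nf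
    have h3 : ((2:ℝ) ^ (-s)) ^ k = (2:ℝ) ^ ((-s) * k) := by
      rw [← Real.rpow_natCast ((2:ℝ) ^ (-s)) k, ← Real.rpow_mul two_pos.le]
    rw [h4, h2, h3]
    calc (2:ℝ) ^ (2 * (k:ℝ) * (-s)) * R ^ (-s) * ((2:ℝ) ^ (((k:ℝ) + 1) * s) * R ^ s)
        = ((2:ℝ) ^ (2 * (k:ℝ) * (-s)) * (2:ℝ) ^ (((k:ℝ) + 1) * s)) * (R ^ (-s) * R ^ s) := by
          ring
      _ = (2:ℝ) ^ (s + (-s) * k) := by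
          rw [hRs, mul_one, ← Real.rpow_add two_pos]
          congr 1; ring
      _ = (2:ℝ) ^ s * (2:ℝ) ^ ((-s) * (k:ℝ)) := by rw [Real.rpow_add two_pos]
  -- sum of coefficients
  have hA1 : (1:ℝ) < (2:ℝ) ^ s := by
    have := Real.rpow_lt_rpow_of_exponent_lt (x := 2) one_lt_two hs
    simpa using this
  have hAinv : (2:ℝ) ^ (-s) = ((2:ℝ) ^ s)⁻¹ := by rw [Real.rpow_neg two_pos.le]
  have hsum : (∑' j : ℕ, ENNReal.ofReal (a j * (c (j + 1)) ^ s))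
      ≤ ENNReal.ofReal ((2:ℝ) ^ (4 * s) / ((2:ℝ) ^ s - 1)) := by
    rw [tsum_eq_zero_add' ENNReal.summable, hb0]
    have htail : (∑' k : ℕ, ENNReal.ofReal (a (k + 1) * (c (k + 1 + 1)) ^ s))
        = ENNReal.ofReal ((2:ℝ) ^ s) * ∑' k : ℕ, (ENNReal.ofReal ((2:ℝ) ^ (-s))) ^ k := by
      rw [← ENNReal.tsum_mul_left]
      congr 1; ext k
      rw [hbk k, ENNReal.ofReal_mul (by positivity), ENNReal.ofReal_pow (by positivity)]
    rw [htail, ENNReal.tsum_geometric]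
    set A := (2:ℝ) ^ s with hA
    have hApos : (0:ℝ) < A := by linarith
    have hinvlt : A⁻¹ < 1 := inv_lt_one_of_one_lt₀ hA1
    have hinvpos : (0:ℝ) < A⁻¹ := by positivity
    have h1 : (1:ℝ≥0∞) - ENNReal.ofReal ((2:ℝ) ^ (-s)) = ENNReal.ofReal (1 - A⁻¹) := by
      rw [hAinv, ENNReal.ofReal_sub 1 hinvpos.le, ENNReal.ofReal_one]
    rw [h1, ← ENNReal.ofReal_inv_of_pos (by linarith), ← ENNReal.ofReal_mul hApos.le,
      ← ENNReal.ofReal_add (by norm_num)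
        (mul_nonneg hApos.le (inv_nonneg.mpr (by linarith)))]
    apply ENNReal.ofReal_le_ofReal
    have h4s : (2:ℝ) ^ (4 * s) = A ^ (4:ℕ) := by
      rw [hA, ← Real.rpow_natCast ((2:ℝ) ^ s) 4, ← Real.rpow_mul two_pos.le]
      congr 1; push_cast; ring
    rw [h4s]
    have hA1' : (0:ℝ) < A - 1 := by linarith
    have hA1'' : (0:ℝ) < 1 - A⁻¹ := by linarith
    have hk : ((1:ℝ) - A⁻¹)⁻¹ = A / (A - 1) := by
      rw [show (1:ℝ) - A⁻¹ = (A - 1) / A by field_simp, inv_div]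
    rw [hk]
    have e1 : 1 + A * (A / (A - 1)) = (A - 1 + A ^ 2) / (A - 1) := by
      field_simp
    rw [e1, div_le_div_iff₀ hA1' hA1']
    have hcube : (0:ℝ) < A ^ 3 + A ^ 2 - 1 := by nlinarith
    nlinarith [mul_pos hA1' hcube]
  calc (∫⁻ p : Pt n m, ENNReal.ofReal ((R + ‖p.1‖ ^ 2 / R) ^ (-s)) * g p)
      = ∫⁻ p in Set.univ, ENNReal.ofReal ((R + ‖p.1‖ ^ 2 / R) ^ (-s)) * g p := by
        rw [setLIntegral_univ]
    _ = ∑' j : ℕ, ∫⁻ p in S j, ENNReal.ofReal ((R + ‖p.1‖ ^ 2 / R) ^ (-s)) * g p := by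
        rw [← hSunion, lintegral_iUnion hSmeas hSdisj]
    _ ≤ ∑' j : ℕ, ENNReal.ofReal (a j * (c (j + 1)) ^ s) * M := ENNReal.tsum_le_tsum hterm
    _ = (∑' j : ℕ, ENNReal.ofReal (a j * (c (j + 1)) ^ s)) * M := ENNReal.tsum_mul_right
    _ ≤ ENNReal.ofReal ((2:ℝ) ^ (4 * s) / ((2:ℝ) ^ s - 1)) * M := mul_le_mul_left hsum _
end
end

section
/- Let n, m ≥ 1 and let u be a measurable function on ℝ^n × ℝ^m. Then for every R > 0: ‖⟨x⟩_R^{-1}·u‖_{L²(ℝ^{n+m})} ≤ 4·‖u‖_X and ‖⟨x⟩_R^{-3}·u‖_{L²(ℝ^{n+m})} ≤ 10·‖u‖_{X₁}. -/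
open MeasureTheory ENNReal Real

noncomputable section

variable {n m : ℕ}

/-- Auxiliary dyadic-decomposition bound used for STATEMENT 13. -/
lemma MC_aux {n m : ℕ} (s : ℝ) (hs : 1 ≤ s) (u : Pt n m → ℂ) (hu : Measurable u)
    (R : ℝ) (hR : 0 < R) (N C : ℝ≥0∞)
    (hN : ∀ r : ℝ, 0 < r → L2 u {p : Pt n m | ‖p.1‖ ≤ r} ≤ ENNReal.ofReal (r ^ (s/2)) * N)
    (hC : 1 + ENNReal.ofReal (2 ^ s) * 2 ≤ C ^ (2:ℝ)) :
    eLpNorm (fun p : Pt n m => ((R + ‖p.1‖ ^ 2 / R) ^ (-s/2)) • u p) 2 volume ≤ C * N := by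
  have hbpos : ∀ p : Pt n m, 0 < R + ‖p.1‖ ^ 2 / R := fun p => by positivity
  set lb : ℕ → ℝ := fun j => if j = 0 then 0 else 2 ^ (j - 1) * R with hlb
  set d : ℕ → ℝ := fun j => if j = 0 then R else 4 ^ (j - 1) * R with hd
  set S : ℕ → Set (Pt n m) := fun j => {p | lb j ≤ ‖p.1‖ ∧ ‖p.1‖ ≤ 2 ^ j * R} with hSdef
  have hdpos : ∀ j, 0 < d j := by
    intro j
    rcases j with _ | j <;> simp [hd] <;> positivity
  have hSm : ∀ j, MeasurableSet (S j) := by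
    intro j
    have h : S j = (fun p : Pt n m => ‖p.1‖) ⁻¹' Set.Icc (lb j) (2 ^ j * R) := rfl
    rw [h]
    exact (measurable_fst.norm) measurableSet_Icc
  have hcover : Set.univ ⊆ ⋃ j, S j := by
    intro p _
    by_cases h0 : ‖p.1‖ ≤ R
    · refine Set.mem_iUnion.2 ⟨0, ?_, ?_⟩ <;> simp [hlb, h0, norm_nonneg]
    · push_neg at h0
      have hex : ∃ k, ‖p.1‖ ≤ 2 ^ k * R := by
        obtain ⟨k, hk⟩ := pow_unbounded_of_one_lt (‖p.1‖ / R) (by norm_num : (1:ℝ) < 2)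
        rw [div_lt_iff₀ hR] at hk
        exact ⟨k, hk.le⟩
      have hk1 : ‖p.1‖ ≤ 2 ^ (Nat.find hex) * R := Nat.find_spec hex
      have hkne : Nat.find hex ≠ 0 := by
        intro h
        rw [h] at hk1
        simp at hk1
        linarith
      obtain ⟨k', hk'⟩ := Nat.exists_eq_succ_of_ne_zero hkne
      have hk2 : ¬ (‖p.1‖ ≤ 2 ^ k' * R) := Nat.find_min hex (by omega)
      push_neg at hk2
      rw [hk'] at hk1
      refine Set.mem_iUnion.2 ⟨k' + 1, ?_, hk1⟩
      simp only [hlb]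
      simp
      linarith
  have hdb : ∀ j, ∀ p ∈ S j, d j ≤ R + ‖p.1‖ ^ 2 / R := by
    intro j p hp
    rcases j with _ | j
    · have : (0:ℝ) ≤ ‖p.1‖ ^ 2 / R := by positivity
      simp only [hd]
      simp
      linarith
    · obtain ⟨hp1, _⟩ := hp
      simp only [hlb] at hp1
      simp at hp1
      have h1 : ((2:ℝ) ^ j * R) ^ 2 ≤ ‖p.1‖ ^ 2 :=
        pow_le_pow_left₀ (by positivity) hp1 2
      have h4 : ((2:ℝ) ^ j) ^ 2 = 4 ^ j := by
        rw [show (4:ℝ) = 2 ^ 2 by norm_num, ← pow_mul, mul_comm j 2, pow_mul]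
      have h2 : (4:ℝ) ^ j * R ≤ ‖p.1‖ ^ 2 / R := by
        rw [le_div_iff₀ hR]
        calc (4:ℝ) ^ j * R * R = ((2:ℝ) ^ j * R) ^ 2 := by rw [mul_pow, h4]; ring
          _ ≤ ‖p.1‖ ^ 2 := h1
      simp only [hd]
      simp
      linarith
  have hw : ∀ j, ∀ p ∈ S j,
      (‖(R + ‖p.1‖ ^ 2 / R) ^ (-s/2)‖₊ : ℝ≥0∞) ^ (2:ℝ) ≤ ENNReal.ofReal ((d j) ^ (-s)) := by
    intro j p hp
    have hb := hbpos p
    rw [← enorm_eq_nnnorm, Real.enorm_eq_ofReal (Real.rpow_nonneg hb.le _),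
      ENNReal.ofReal_rpow_of_nonneg (Real.rpow_nonneg hb.le _) (by norm_num : (0:ℝ) ≤ 2),
      ← Real.rpow_mul hb.le]
    apply ENNReal.ofReal_le_ofReal
    rw [show -s/2*2 = -s by ring]
    exact Real.rpow_le_rpow_of_nonpos (hdpos j) (hdb j p hp) (by linarith)
  have humeas : Measurable fun p : Pt n m => (‖u p‖₊ : ℝ≥0∞) ^ (2:ℝ) :=
    hu.enorm.pow_const _
  have key : ∀ j, ∫⁻ p in S j,
      (‖((R + ‖p.1‖ ^ 2 / R) ^ (-s/2)) • u p‖₊ : ℝ≥0∞) ^ (2:ℝ) ∂volume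
      ≤ ENNReal.ofReal ((d j) ^ (-s) * ((2:ℝ) ^ j * R) ^ s) * N ^ (2:ℝ) := by
    intro j
    have hrj : (0:ℝ) < 2 ^ j * R := by positivity
    calc ∫⁻ p in S j, (‖((R + ‖p.1‖ ^ 2 / R) ^ (-s/2)) • u p‖₊ : ℝ≥0∞) ^ (2:ℝ) ∂volume
        ≤ ∫⁻ p in S j, ENNReal.ofReal ((d j) ^ (-s)) * (‖u p‖₊ : ℝ≥0∞) ^ (2:ℝ) ∂volume := by
          refine setLIntegral_mono (measurable_const.mul humeas) ?_
          intro p hp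
          rw [nnnorm_smul, ENNReal.coe_mul,
            ENNReal.mul_rpow_of_nonneg _ _ (by norm_num : (0:ℝ) ≤ 2)]
          exact mul_le_mul_left (hw j p hp) _
      _ = ENNReal.ofReal ((d j) ^ (-s)) * ∫⁻ p in S j, (‖u p‖₊ : ℝ≥0∞) ^ (2:ℝ) ∂volume :=
          lintegral_const_mul _ humeas
      _ ≤ ENNReal.ofReal ((d j) ^ (-s)) *
          ∫⁻ p in {p : Pt n m | ‖p.1‖ ≤ 2 ^ j * R}, (‖u p‖₊ : ℝ≥0∞) ^ (2:ℝ) ∂volume :=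
          mul_le_mul_right (lintegral_mono_set (fun p hp => hp.2)) _
      _ ≤ ENNReal.ofReal ((d j) ^ (-s)) *
          (ENNReal.ofReal (((2:ℝ) ^ j * R) ^ s) * N ^ (2:ℝ)) := by
          refine mul_le_mul_right ?_ _
          have hL : ∫⁻ p in {p : Pt n m | ‖p.1‖ ≤ 2 ^ j * R}, (‖u p‖₊ : ℝ≥0∞) ^ (2:ℝ) ∂volume
              = (L2 u {p : Pt n m | ‖p.1‖ ≤ 2 ^ j * R}) ^ (2:ℝ) := by
            rw [L2, eLpNorm_eq_lintegral_rpow_enorm_toReal (by norm_num) (by norm_num),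
              ENNReal.toReal_ofNat, ← ENNReal.rpow_mul]
            norm_num
            rfl
          rw [hL]
          calc (L2 u {p : Pt n m | ‖p.1‖ ≤ 2 ^ j * R}) ^ (2:ℝ)
              ≤ (ENNReal.ofReal (((2:ℝ) ^ j * R) ^ (s/2)) * N) ^ (2:ℝ) :=
                ENNReal.rpow_le_rpow (hN _ hrj) (by norm_num)
            _ = ENNReal.ofReal (((2:ℝ) ^ j * R) ^ s) * N ^ (2:ℝ) := by
                rw [ENNReal.mul_rpow_of_nonneg _ _ (by norm_num : (0:ℝ) ≤ 2),
                  ENNReal.ofReal_rpow_of_nonneg (by positivity) (by norm_num : (0:ℝ) ≤ 2),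
                  ← Real.rpow_mul hrj.le, show s/2*2 = s by ring]
      _ = ENNReal.ofReal ((d j) ^ (-s) * ((2:ℝ) ^ j * R) ^ s) * N ^ (2:ℝ) := by
          rw [← mul_assoc, ← ENNReal.ofReal_mul (by positivity)]
  have hgeo : ∑' j : ℕ, ENNReal.ofReal ((d j) ^ (-s) * ((2:ℝ) ^ j * R) ^ s)
      ≤ 1 + ENNReal.ofReal (2 ^ s) * 2 := by
    rw [tsum_eq_zero_add' ENNReal.summable]
    have h0 : ENNReal.ofReal ((d 0) ^ (-s) * ((2:ℝ) ^ 0 * R) ^ s) = 1 := by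
      have h : (R:ℝ) ^ (-s) * R ^ s = 1 := by
        rw [← Real.rpow_add hR, neg_add_cancel, Real.rpow_zero]
      simp only [hd]
      simp [h]
    have hsucc : ∀ j : ℕ, ENNReal.ofReal ((d (j+1)) ^ (-s) * ((2:ℝ) ^ (j+1) * R) ^ s)
        ≤ ENNReal.ofReal (2 ^ s) * (2⁻¹ : ℝ≥0∞) ^ j := by
      intro j
      have ha : (0:ℝ) < 4 ^ j * R := by positivity
      have hb2 : (0:ℝ) < 2 ^ (j+1) * R := by positivity
      have hd1 : d (j+1) = 4 ^ j * R := by simp [hd]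
      have hfrac : ((4:ℝ) ^ j * R)⁻¹ * ((2:ℝ) ^ (j+1) * R) = 2 * (2⁻¹:ℝ) ^ j := by
        have h4 : (4:ℝ) ^ j = 2 ^ j * 2 ^ j := by
          rw [show (4:ℝ) = 2 * 2 by norm_num, mul_pow]
        rw [h4, inv_pow, pow_succ]
        field_simp
      have hpow : ((2⁻¹:ℝ) ^ j) ^ s ≤ (2⁻¹:ℝ) ^ j := by
        have hj : (j:ℝ) ≤ (j:ℝ) * s := by nlinarith [Nat.cast_nonneg (α := ℝ) j]
        calc ((2⁻¹:ℝ) ^ j) ^ s = (2⁻¹:ℝ) ^ ((j:ℝ) * s) := by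
              rw [Real.rpow_mul (by norm_num : (0:ℝ) ≤ 2⁻¹), Real.rpow_natCast]
          _ ≤ (2⁻¹:ℝ) ^ (j:ℝ) :=
              Real.rpow_le_rpow_of_exponent_ge (by norm_num) (by norm_num) hj
          _ = (2⁻¹:ℝ) ^ j := Real.rpow_natCast _ j
      have hkey : ((4:ℝ) ^ j * R) ^ (-s) * ((2:ℝ) ^ (j+1) * R) ^ s ≤ 2 ^ s * (2⁻¹:ℝ) ^ j := by
        calc ((4:ℝ) ^ j * R) ^ (-s) * ((2:ℝ) ^ (j+1) * R) ^ s
            = (((4:ℝ) ^ j * R)⁻¹ * ((2:ℝ) ^ (j+1) * R)) ^ s := by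
              rw [Real.rpow_neg ha.le, ← Real.inv_rpow ha.le,
                ← Real.mul_rpow (by positivity) hb2.le]
          _ = (2 * (2⁻¹:ℝ) ^ j) ^ s := by rw [hfrac]
          _ = 2 ^ s * ((2⁻¹:ℝ) ^ j) ^ s := Real.mul_rpow (by norm_num) (by positivity)
          _ ≤ 2 ^ s * (2⁻¹:ℝ) ^ j := by
              have h2s : (0:ℝ) ≤ 2 ^ s := Real.rpow_nonneg (by norm_num) _
              exact mul_le_mul_of_nonneg_left hpow h2s
      calc ENNReal.ofReal ((d (j+1)) ^ (-s) * ((2:ℝ) ^ (j+1) * R) ^ s)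
          ≤ ENNReal.ofReal (2 ^ s * (2⁻¹:ℝ) ^ j) := by
            apply ENNReal.ofReal_le_ofReal
            rw [hd1]
            exact hkey
        _ = ENNReal.ofReal (2 ^ s) * (2⁻¹ : ℝ≥0∞) ^ j := by
            rw [ENNReal.ofReal_mul (Real.rpow_nonneg (by norm_num) _),
              ENNReal.ofReal_pow (by norm_num : (0:ℝ) ≤ 2⁻¹),
              ENNReal.ofReal_inv_of_pos (by norm_num : (0:ℝ) < 2), ENNReal.ofReal_ofNat]
    calc ENNReal.ofReal ((d 0) ^ (-s) * ((2:ℝ) ^ 0 * R) ^ s)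
          + ∑' j : ℕ, ENNReal.ofReal ((d (j+1)) ^ (-s) * ((2:ℝ) ^ (j+1) * R) ^ s)
        ≤ 1 + ∑' j : ℕ, ENNReal.ofReal (2 ^ s) * (2⁻¹ : ℝ≥0∞) ^ j :=
          add_le_add (le_of_eq h0) (ENNReal.tsum_le_tsum hsucc)
      _ = 1 + ENNReal.ofReal (2 ^ s) * ∑' j : ℕ, (2⁻¹ : ℝ≥0∞) ^ j := by
          rw [ENNReal.tsum_mul_left]
      _ = 1 + ENNReal.ofReal (2 ^ s) * 2 := by
          rw [show ∑' j : ℕ, (2⁻¹ : ℝ≥0∞) ^ j = 2 by rw [ENNReal.tsum_geometric]; norm_num]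
  have hU : (⋃ j, S j) = Set.univ := Set.eq_univ_of_univ_subset hcover
  have hI : ∫⁻ p, (‖((R + ‖p.1‖ ^ 2 / R) ^ (-s/2)) • u p‖₊ : ℝ≥0∞) ^ (2:ℝ) ∂volume
      ≤ (1 + ENNReal.ofReal (2 ^ s) * 2) * N ^ (2:ℝ) := by
    have e1 : ∫⁻ p, (‖((R + ‖p.1‖ ^ 2 / R) ^ (-s/2)) • u p‖₊ : ℝ≥0∞) ^ (2:ℝ) ∂volume
        = ∫⁻ p in ⋃ j, S j, (‖((R + ‖p.1‖ ^ 2 / R) ^ (-s/2)) • u p‖₊ : ℝ≥0∞) ^ (2:ℝ) ∂volume := by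
      rw [hU, setLIntegral_univ]
    calc ∫⁻ p, (‖((R + ‖p.1‖ ^ 2 / R) ^ (-s/2)) • u p‖₊ : ℝ≥0∞) ^ (2:ℝ) ∂volume
        = ∫⁻ p in ⋃ j, S j,
            (‖((R + ‖p.1‖ ^ 2 / R) ^ (-s/2)) • u p‖₊ : ℝ≥0∞) ^ (2:ℝ) ∂volume := e1
      _ ≤ ∑' j : ℕ, ∫⁻ p in S j,
            (‖((R + ‖p.1‖ ^ 2 / R) ^ (-s/2)) • u p‖₊ : ℝ≥0∞) ^ (2:ℝ) ∂volume :=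
          lintegral_iUnion_le _ _
      _ ≤ ∑' j : ℕ, ENNReal.ofReal ((d j) ^ (-s) * ((2:ℝ) ^ j * R) ^ s) * N ^ (2:ℝ) :=
          ENNReal.tsum_le_tsum key
      _ = (∑' j : ℕ, ENNReal.ofReal ((d j) ^ (-s) * ((2:ℝ) ^ j * R) ^ s)) * N ^ (2:ℝ) :=
          ENNReal.tsum_mul_right
      _ ≤ (1 + ENNReal.ofReal (2 ^ s) * 2) * N ^ (2:ℝ) := mul_le_mul_left hgeo _
  rw [eLpNorm_eq_lintegral_rpow_enorm_toReal (by norm_num) (by norm_num), ENNReal.toReal_ofNat]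
  calc (∫⁻ p, (‖((R + ‖p.1‖ ^ 2 / R) ^ (-s/2)) • u p‖₊ : ℝ≥0∞) ^ (2:ℝ) ∂volume) ^ (1/(2:ℝ))
      ≤ ((1 + ENNReal.ofReal (2 ^ s) * 2) * N ^ (2:ℝ)) ^ (1/(2:ℝ)) :=
        ENNReal.rpow_le_rpow hI (by norm_num)
    _ ≤ (C ^ (2:ℝ) * N ^ (2:ℝ)) ^ (1/(2:ℝ)) :=
        ENNReal.rpow_le_rpow (mul_le_mul_left hC _) (by norm_num)
    _ = ((C * N) ^ (2:ℝ)) ^ (1/(2:ℝ)) := by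
        rw [ENNReal.mul_rpow_of_nonneg _ _ (by norm_num : (0:ℝ) ≤ 2)]
    _ = C * N := by
        rw [← ENNReal.rpow_mul]
        norm_num


/-- `‖⟨x⟩_R^{-1}u‖_{L²} ≤ 4‖u‖_X` and `‖⟨x⟩_R^{-3}u‖_{L²} ≤ 10‖u‖_{X₁}`. -/
theorem MC_to_weight (n m : ℕ) (hn : 1 ≤ n) (hm : 1 ≤ m)
    (u : Pt n m → ℂ) (hu : Measurable u) (R : ℝ) (hR : 0 < R) :
    eLpNorm (fun p : Pt n m => ((R + ‖p.1‖ ^ 2 / R) ^ (-(1:ℝ)/2)) • u p) 2 volume ≤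
        4 * normX u
    ∧ eLpNorm (fun p : Pt n m => ((R + ‖p.1‖ ^ 2 / R) ^ (-(3:ℝ)/2)) • u p) 2 volume ≤
        10 * normX1 u := by
  have hN1 : ∀ r : ℝ, 0 < r → L2 u {p : Pt n m | ‖p.1‖ ≤ r}
      ≤ ENNReal.ofReal (r ^ ((1:ℝ)/2)) * normX u := by
    intro r hr
    have h1 : ENNReal.ofReal (r ^ (-(1:ℝ)/2)) * L2 u {p : Pt n m | ‖p.1‖ ≤ r} ≤ normX u := by
      rw [normX]
      exact le_iSup₂ (f := fun (R:ℝ) (_ : 0 < R) =>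
        ENNReal.ofReal (R ^ (-(1:ℝ)/2)) * L2 u {p : Pt n m | ‖p.1‖ ≤ R}) r hr
    calc L2 u {p : Pt n m | ‖p.1‖ ≤ r}
        = ENNReal.ofReal (r ^ ((1:ℝ)/2)) *
            (ENNReal.ofReal (r ^ (-(1:ℝ)/2)) * L2 u {p : Pt n m | ‖p.1‖ ≤ r}) := by
          rw [← mul_assoc, ← ENNReal.ofReal_mul (by positivity), ← Real.rpow_add hr,
            show (1:ℝ)/2 + -(1:ℝ)/2 = 0 by ring, Real.rpow_zero, ENNReal.ofReal_one, one_mul]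
      _ ≤ _ := mul_le_mul_right h1 _
  have hN3 : ∀ r : ℝ, 0 < r → L2 u {p : Pt n m | ‖p.1‖ ≤ r}
      ≤ ENNReal.ofReal (r ^ ((3:ℝ)/2)) * normX1 u := by
    intro r hr
    have h1 : ENNReal.ofReal (r ^ (-(3:ℝ)/2)) * L2 u {p : Pt n m | ‖p.1‖ ≤ r} ≤ normX1 u := by
      rw [normX1]
      exact le_iSup₂ (f := fun (R:ℝ) (_ : 0 < R) =>
        ENNReal.ofReal (R ^ (-(3:ℝ)/2)) * L2 u {p : Pt n m | ‖p.1‖ ≤ R}) r hr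
    calc L2 u {p : Pt n m | ‖p.1‖ ≤ r}
        = ENNReal.ofReal (r ^ ((3:ℝ)/2)) *
            (ENNReal.ofReal (r ^ (-(3:ℝ)/2)) * L2 u {p : Pt n m | ‖p.1‖ ≤ r}) := by
          rw [← mul_assoc, ← ENNReal.ofReal_mul (by positivity), ← Real.rpow_add hr,
            show (3:ℝ)/2 + -(3:ℝ)/2 = 0 by ring, Real.rpow_zero, ENNReal.ofReal_one, one_mul]
      _ ≤ _ := mul_le_mul_right h1 _
  constructor
  · exact MC_aux 1 le_rfl u hu R hR (normX u) 4 hN1 (by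
      rw [Real.rpow_one, ENNReal.ofReal_ofNat, show (2:ℝ) = ((2:ℕ):ℝ) by norm_num,
        ENNReal.rpow_natCast]
      norm_num)
  · exact MC_aux 3 (by norm_num) u hu R hR (normX1 u) 10 hN3 (by
      rw [show (2:ℝ)^(3:ℝ) = 8 by norm_num, show ENNReal.ofReal 8 = 8 from ENNReal.ofReal_ofNat 8,
        show (2:ℝ) = ((2:ℕ):ℝ) by norm_num, ENNReal.rpow_natCast]
      norm_num)
end
end

section
/- Let n, m ≥ 1 and let u be a measurable function on ℝ^n × ℝ^m. Then for every R > 0: ‖u‖_{X*} ≤ 16·‖⟨x⟩_R·u‖_{L²(ℝ^{n+m})}. -/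
open MeasureTheory ENNReal Real

noncomputable section

variable {n m : ℕ}

lemma geom_piece : ∑' k : ℕ, ENNReal.ofReal ((2:ℝ)^((1:ℝ)/2) * ((2:ℝ)^(-((1:ℝ)/2)))^k) ≤ 8 := by
  set a : ℝ := (2:ℝ)^((1:ℝ)/2) with ha
  set r : ℝ := (2:ℝ)^(-((1:ℝ)/2)) with hr
  have ha0 : 0 < a := Real.rpow_pos_of_pos (by norm_num) _
  have ha2 : a^2 = 2 := by
    rw [ha, ← Real.rpow_natCast ((2:ℝ)^((1:ℝ)/2)) 2, ← Real.rpow_mul (by norm_num)]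
    norm_num
  have ha1 : 1 < a := by nlinarith
  have hra : r = a⁻¹ := by rw [hr, ha, Real.rpow_neg (by norm_num)]
  have hr0 : 0 ≤ r := Real.rpow_nonneg (by norm_num) _
  have hr1 : r < 1 := by rw [hra]; exact inv_lt_one_of_one_lt₀ ha1
  have hsum : Summable (fun k : ℕ => a * r^k) :=
    (summable_geometric_of_lt_one hr0 hr1).mul_left a
  have heq : (∑' k : ℕ, a * r^k) = a * (1 - r)⁻¹ := by
    rw [tsum_mul_left, tsum_geometric_of_lt_one hr0 hr1]
  have hle : (∑' k : ℕ, a * r^k) ≤ 8 := by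
    rw [heq, hra]
    have h1 : 1 - a⁻¹ = (a - 1)/a := by field_simp
    rw [h1, inv_div, ← mul_div_assoc, div_le_iff₀ (by linarith : (0:ℝ) < a - 1)]
    nlinarith
  calc ∑' k : ℕ, ENNReal.ofReal (a * r^k)
      = ENNReal.ofReal (∑' k : ℕ, a * r^k) := by
        rw [ENNReal.ofReal_tsum_of_nonneg (fun k => by positivity) hsum]
    _ ≤ ENNReal.ofReal 8 := ENNReal.ofReal_le_ofReal hle
    _ = 8 := by norm_num

lemma sum_c_le (R : ℝ) (hR : 0 < R) :
    ∑' j : ℤ, ENNReal.ofReal ((2:ℝ)^((j:ℝ)/2) *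
      (max (R^((1:ℝ)/2)) ((2:ℝ)^((j:ℝ)-1) / R^((1:ℝ)/2)))⁻¹) ≤ 16 := by
  set sR : ℝ := R^((1:ℝ)/2) with hsR
  have hsR0 : 0 < sR := Real.rpow_pos_of_pos hR _
  set w : ℤ → ℝ := fun j => max sR ((2:ℝ)^((j:ℝ)-1) / sR) with hw
  set c : ℤ → ℝ := fun j => (2:ℝ)^((j:ℝ)/2) * (w j)⁻¹ with hc
  set a : ℝ := (2:ℝ)^((1:ℝ)/2) with ha
  set r : ℝ := (2:ℝ)^(-((1:ℝ)/2)) with hr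
  set j₀ : ℤ := ⌈Real.logb 2 R⌉ with hj₀
  have hw0 : ∀ j, 0 < w j := fun j => lt_of_lt_of_le hsR0 (le_max_left _ _)
  have h2 : (0:ℝ) < 2 := by norm_num
  have hj1 : R ≤ (2:ℝ)^((j₀:ℝ)) := by
    calc R = 2 ^ Real.logb 2 R := (Real.rpow_logb h2 (by norm_num) hR).symm
    _ ≤ 2 ^ ((j₀:ℝ)) := Real.rpow_le_rpow_of_exponent_le one_le_two (Int.le_ceil _)
  have hj2 : (2:ℝ)^((j₀:ℝ)) ≤ 2*R := by
    have h : (j₀:ℝ) ≤ Real.logb 2 R + 1 := (Int.ceil_lt_add_one _).le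
    calc (2:ℝ)^((j₀:ℝ)) ≤ 2 ^ (Real.logb 2 R + 1) :=
          Real.rpow_le_rpow_of_exponent_le one_le_two h
    _ = 2 ^ Real.logb 2 R * 2 := by rw [Real.rpow_add h2, Real.rpow_one]
    _ = 2*R := by rw [Real.rpow_logb h2 (by norm_num) hR]; ring
  -- r^k = 2^{-(k:ℝ)/2}
  have hrk : ∀ k : ℕ, r^k = (2:ℝ)^(-((k:ℝ))/2) := by
    intro k
    rw [hr, ← Real.rpow_natCast ((2:ℝ)^(-((1:ℝ)/2))) k, ← Real.rpow_mul h2.le]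
    ring_nf
  have hr0 : 0 ≤ r := Real.rpow_nonneg h2.le _
  -- 2^{j₀/2} ≤ a * sR
  have hupper : (2:ℝ)^((j₀:ℝ)/2) ≤ a * sR := by
    have h1 : ((2:ℝ)^((j₀:ℝ)))^((1:ℝ)/2) ≤ (2*R)^((1:ℝ)/2) :=
      Real.rpow_le_rpow (Real.rpow_pos_of_pos h2 _).le hj2 (by norm_num)
    rw [← Real.rpow_mul h2.le] at h1
    rw [Real.mul_rpow h2.le hR.le] at h1
    calc (2:ℝ)^((j₀:ℝ)/2) = (2:ℝ)^((j₀:ℝ)*(1/2)) := by ring_nf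
    _ ≤ 2^((1:ℝ)/2) * R^((1:ℝ)/2) := h1
    _ = a * sR := rfl
  -- sR ≤ 2^{j₀/2}
  have hlower : sR ≤ (2:ℝ)^((j₀:ℝ)/2) := by
    have h1 : R^((1:ℝ)/2) ≤ ((2:ℝ)^((j₀:ℝ)))^((1:ℝ)/2) :=
      Real.rpow_le_rpow hR.le hj1 (by norm_num)
    rw [← Real.rpow_mul h2.le] at h1
    calc sR = R^((1:ℝ)/2) := rfl
    _ ≤ (2:ℝ)^((j₀:ℝ)*(1/2)) := h1
    _ = (2:ℝ)^((j₀:ℝ)/2) := by ring_nf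
  -- Branch 1
  have hb1 : ∀ k : ℕ, c (j₀ - k) ≤ a * r^k := by
    intro k
    have hcast : (((j₀ - k : ℤ)):ℝ) = (j₀:ℝ) - k := by push_cast; ring
    have hwin : (w (j₀ - k))⁻¹ ≤ sR⁻¹ :=
      inv_anti₀ hsR0 (le_max_left _ _)
    have h1 : c (j₀ - k) ≤ (2:ℝ)^(((j₀:ℝ) - k)/2) * sR⁻¹ := by
      rw [hc]; dsimp only; rw [hcast]
      exact mul_le_mul_of_nonneg_left hwin (Real.rpow_nonneg h2.le _)
    refine h1.trans ?_
    have hsplit : (2:ℝ)^(((j₀:ℝ) - k)/2) = (2:ℝ)^((j₀:ℝ)/2) * r^k := by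
      rw [hrk k, ← Real.rpow_add h2]; ring_nf
    rw [hsplit]
    calc (2:ℝ)^((j₀:ℝ)/2) * r^k * sR⁻¹
        = ((2:ℝ)^((j₀:ℝ)/2) * sR⁻¹) * r^k := by ring
    _ ≤ (a * sR * sR⁻¹) * r^k := by
        apply mul_le_mul_of_nonneg_right _ (pow_nonneg hr0 k)
        exact mul_le_mul_of_nonneg_right hupper (inv_nonneg.2 hsR0.le)
    _ = a * r^k := by field_simp
  -- Branch 2
  have hb2 : ∀ k : ℕ, c (j₀ + 1 + k) ≤ a * r^k := by
    intro k
    have hcast : (((j₀ + 1 + k : ℤ)):ℝ) = (j₀:ℝ) + 1 + k := by push_cast; ring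
    have hwin : (w (j₀ + 1 + k))⁻¹ ≤ ((2:ℝ)^(((j₀:ℝ)+1+k)-1) / sR)⁻¹ := by
      apply inv_anti₀
      · positivity
      · rw [hw]; dsimp only; rw [hcast]; exact le_max_right _ _
    have h1 : c (j₀ + 1 + k) ≤ (2:ℝ)^(((j₀:ℝ)+1+k)/2) * ((2:ℝ)^(((j₀:ℝ)+1+k)-1) / sR)⁻¹ := by
      rw [hc]; dsimp only; rw [hcast]
      exact mul_le_mul_of_nonneg_left hwin (Real.rpow_nonneg h2.le _)
    refine h1.trans ?_
    have hinv : ((2:ℝ)^(((j₀:ℝ)+1+k)-1) / sR)⁻¹ = sR * (2:ℝ)^(-(((j₀:ℝ)+1+k)-1)) := by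
      rw [Real.rpow_neg h2.le, inv_div]
      ring
    rw [hinv]
    have hcomb : (2:ℝ)^(((j₀:ℝ)+1+k)/2) * (sR * (2:ℝ)^(-(((j₀:ℝ)+1+k)-1)))
        = sR * (2:ℝ)^(-((j₀:ℝ)/2)) * ((2:ℝ)^((1:ℝ)/2) * r^k) := by
      rw [hrk k]
      have h₁ : sR * (2:ℝ)^(-((j₀:ℝ)/2)) * ((2:ℝ)^((1:ℝ)/2) * (2:ℝ)^(-(k:ℝ)/2))
          = sR * (2:ℝ)^(-((j₀:ℝ)/2) + ((1:ℝ)/2 + -(k:ℝ)/2)) := by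
        rw [Real.rpow_add h2, Real.rpow_add h2]; ring
      have h₂ : (2:ℝ)^(((j₀:ℝ)+1+(k:ℝ))/2) * (sR * (2:ℝ)^(-(((j₀:ℝ)+1+(k:ℝ))-1)))
          = sR * (2:ℝ)^((((j₀:ℝ)+1+(k:ℝ))/2) + -((((j₀:ℝ)+1+(k:ℝ))-1))) := by
        rw [Real.rpow_add h2]; ring
      rw [h₁, h₂]
      congr 1
      ring
    rw [hcomb]
    have hfac : sR * (2:ℝ)^(-((j₀:ℝ)/2)) ≤ 1 := by
      rw [Real.rpow_neg h2.le]
      rw [mul_inv_le_iff₀ (Real.rpow_pos_of_pos h2 _), one_mul]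
      exact hlower
    calc sR * (2:ℝ)^(-((j₀:ℝ)/2)) * ((2:ℝ)^((1:ℝ)/2) * r^k)
        ≤ 1 * ((2:ℝ)^((1:ℝ)/2) * r^k) := by
          apply mul_le_mul_of_nonneg_right hfac; positivity
    _ = a * r^k := by rw [one_mul]
  -- Split the ℤ-sum
  set S : Set ℤ := {j | j ≤ j₀} with hS
  let e1 : ℕ ≃ S :=
    { toFun := fun k => ⟨j₀ - k, by simp only [hS, Set.mem_setOf_eq]; omega⟩
      invFun := fun j => (j₀ - j.1).toNat
      left_inv := fun k => by
        show (j₀ - (j₀ - (k:ℤ))).toNat = k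
        omega
      right_inv := fun j => by
        have := j.2
        simp only [hS, Set.mem_setOf_eq] at this
        refine Subtype.ext ?_
        show j₀ - ((j₀ - j.1).toNat : ℤ) = j.1
        omega }
  let e2 : ℕ ≃ ↥Sᶜ :=
    { toFun := fun k => ⟨j₀ + 1 + k, by simp only [hS, Set.mem_compl_iff, Set.mem_setOf_eq]; omega⟩
      invFun := fun j => (j.1 - j₀ - 1).toNat
      left_inv := fun k => by
        show (j₀ + 1 + (k:ℤ) - j₀ - 1).toNat = k
        omega
      right_inv := fun j => by
        have := j.2
        simp only [hS, Set.mem_compl_iff, Set.mem_setOf_eq, not_le] at this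
        refine Subtype.ext ?_
        show j₀ + 1 + ((j.1 - j₀ - 1).toNat : ℤ) = j.1
        omega }
  have hsplit := Summable.tsum_add_tsum_compl (s := S)
    (f := fun j => ENNReal.ofReal (c j)) ENNReal.summable ENNReal.summable
  have hS1 : ∑' (j : S), ENNReal.ofReal (c j) ≤ 8 := by
    rw [← e1.tsum_eq (fun j : S => ENNReal.ofReal (c j))]
    refine le_trans (ENNReal.tsum_le_tsum (fun k => ?_)) geom_piece
    have hek : ((e1 k : S) : ℤ) = j₀ - (k:ℤ) := rfl
    simp only [hek]
    exact ENNReal.ofReal_le_ofReal (hb1 k)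
  have hS2 : ∑' (j : ↥Sᶜ), ENNReal.ofReal (c j) ≤ 8 := by
    rw [← e2.tsum_eq (fun j : ↥Sᶜ => ENNReal.ofReal (c j))]
    refine le_trans (ENNReal.tsum_le_tsum (fun k => ?_)) geom_piece
    have hek : ((e2 k : ↥Sᶜ) : ℤ) = j₀ + 1 + (k:ℤ) := rfl
    simp only [hek]
    exact ENNReal.ofReal_le_ofReal (hb2 k)
  calc ∑' j : ℤ, ENNReal.ofReal (c j)
      = (∑' (j : S), ENNReal.ofReal (c j)) + ∑' (j : ↥Sᶜ), ENNReal.ofReal (c j) := hsplit.symm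
    _ ≤ 8 + 8 := add_le_add hS1 hS2
    _ = 16 := by norm_num

/-- `‖u‖_{X*} ≤ 16 ‖⟨x⟩_R u‖_{L²}`. -/
theorem weight_to_Xstar (n m : ℕ) (hn : 1 ≤ n) (hm : 1 ≤ m)
    (u : Pt n m → ℂ) (hu : Measurable u) (R : ℝ) (hR : 0 < R) :
    normXstar u ≤
      16 * eLpNorm (fun p : Pt n m => ((R + ‖p.1‖ ^ 2 / R) ^ ((1:ℝ)/2)) • u p) 2 volume := by
  set W := eLpNorm (fun p : Pt n m => ((R + ‖p.1‖ ^ 2 / R) ^ ((1:ℝ)/2)) • u p) 2 volume with hW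
  set sR : ℝ := R^((1:ℝ)/2) with hsR
  have hsR0 : 0 < sR := Real.rpow_pos_of_pos hR _
  set w : ℤ → ℝ := fun j => max sR ((2:ℝ)^((j:ℝ)-1) / sR) with hw
  have hw0 : ∀ j, 0 < w j := fun j => lt_of_lt_of_le hsR0 (le_max_left _ _)
  have key : ∀ j : ℤ,
      L2 u {p : Pt n m | (2:ℝ)^(j-1) ≤ ‖p.1‖ ∧ ‖p.1‖ ≤ (2:ℝ)^j} ≤
        ENNReal.ofReal (w j)⁻¹ * W := by
    intro j
    set A : Set (Pt n m) := {p : Pt n m | (2:ℝ)^(j-1) ≤ ‖p.1‖ ∧ ‖p.1‖ ≤ (2:ℝ)^j} with hA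
    have hAm : MeasurableSet A := by
      have : A = {p : Pt n m | (2:ℝ)^(j-1) ≤ ‖p.1‖} ∩ {p : Pt n m | ‖p.1‖ ≤ (2:ℝ)^j} := by
        ext p; simp [hA, Set.mem_setOf_eq, Set.mem_inter_iff]
      rw [this]
      exact ((isClosed_le continuous_const continuous_fst.norm).measurableSet).inter
        ((isClosed_le continuous_fst.norm continuous_const).measurableSet)
    have hpt : ∀ᵐ p ∂(volume.restrict A),
        ‖u p‖ ≤ ‖(w j)⁻¹ • (((R + ‖p.1‖ ^ 2 / R) ^ ((1:ℝ)/2)) • u p)‖ := by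
      filter_upwards [ae_restrict_mem hAm] with p hp
      obtain ⟨hp1, _⟩ := hp
      set t : ℝ := (R + ‖p.1‖ ^ 2 / R) ^ ((1:ℝ)/2) with ht
      have hbase : (0:ℝ) < R + ‖p.1‖ ^ 2 / R := by positivity
      have ht0 : 0 ≤ t := Real.rpow_nonneg hbase.le _
      have hwt : w j ≤ t := by
        apply max_le
        · exact Real.rpow_le_rpow hR.le (le_add_of_nonneg_right (by positivity)) (by norm_num)
        · set q : ℝ := (2:ℝ)^((j:ℝ)-1) with hq
          have hq0 : 0 ≤ q := Real.rpow_nonneg (by norm_num) _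
          have hqz : q = (2:ℝ)^((j-1:ℤ)) := by
            rw [hq, ← Real.rpow_intCast (2:ℝ) (j-1)]; push_cast; ring_nf
          have hqx : q ≤ ‖p.1‖ := by rw [hqz]; exact hp1
          have h1 : q^2/R ≤ R + ‖p.1‖ ^ 2 / R := by
            have : q^2 ≤ ‖p.1‖^2 := by nlinarith [norm_nonneg p.1]
            have h2 : q^2/R ≤ ‖p.1‖^2/R := by
              gcongr
            calc q^2/R ≤ ‖p.1‖^2/R := h2
            _ ≤ R + ‖p.1‖^2/R := le_add_of_nonneg_left hR.le
          have h2 : (q^2/R)^((1:ℝ)/2) ≤ t :=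
            Real.rpow_le_rpow (by positivity) h1 (by norm_num)
          have h3 : (q^2/R)^((1:ℝ)/2) = q / sR := by
            rw [Real.div_rpow (sq_nonneg q) hR.le]
            congr 1
            rw [← Real.rpow_natCast q 2, ← Real.rpow_mul hq0]
            norm_num
          rw [← h3]; exact h2
      have h5 : 1 ≤ (w j)⁻¹ * t := by
        rw [inv_mul_eq_div, le_div_iff₀ (hw0 j), one_mul]
        exact hwt
      rw [norm_smul, norm_smul, Real.norm_eq_abs, Real.norm_eq_abs,
        abs_of_nonneg (inv_nonneg.2 (hw0 j).le), abs_of_nonneg ht0, ← mul_assoc]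
      calc ‖u p‖ = 1 * ‖u p‖ := (one_mul _).symm
      _ ≤ ((w j)⁻¹ * t) * ‖u p‖ := mul_le_mul_of_nonneg_right h5 (norm_nonneg _)
    calc L2 u A = eLpNorm u 2 (volume.restrict A) := rfl
    _ ≤ eLpNorm (fun p : Pt n m => (w j)⁻¹ • (((R + ‖p.1‖ ^ 2 / R) ^ ((1:ℝ)/2)) • u p)) 2
          (volume.restrict A) := eLpNorm_mono_ae hpt
    _ = ‖(w j)⁻¹‖ₑ * eLpNorm (fun p : Pt n m => ((R + ‖p.1‖ ^ 2 / R) ^ ((1:ℝ)/2)) • u p)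
          2 (volume.restrict A) := eLpNorm_const_smul ((w j)⁻¹)
            (fun p : Pt n m => ((R + ‖p.1‖ ^ 2 / R) ^ ((1:ℝ)/2)) • u p) 2 (volume.restrict A)
    _ ≤ ENNReal.ofReal (w j)⁻¹ * W := by
        rw [Real.enorm_eq_ofReal (inv_nonneg.2 (hw0 j).le)]
        exact mul_le_mul_right (eLpNorm_mono_measure _ Measure.restrict_le_self) _
  have hsum := sum_c_le R hR
  calc normXstar u
      = ∑' j : ℤ, ENNReal.ofReal ((2:ℝ) ^ ((j:ℝ)/2)) *
          L2 u {p : Pt n m | (2:ℝ)^(j-1) ≤ ‖p.1‖ ∧ ‖p.1‖ ≤ (2:ℝ)^j} := rfl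
    _ ≤ ∑' j : ℤ, ENNReal.ofReal ((2:ℝ) ^ ((j:ℝ)/2)) * (ENNReal.ofReal (w j)⁻¹ * W) :=
        ENNReal.tsum_le_tsum fun j => mul_le_mul_right (key j) _
    _ = ∑' j : ℤ, ENNReal.ofReal ((2:ℝ) ^ ((j:ℝ)/2) * (w j)⁻¹) * W := by
        refine tsum_congr fun j => ?_
        rw [ENNReal.ofReal_mul (Real.rpow_nonneg (by norm_num) _), mul_assoc]
    _ = (∑' j : ℤ, ENNReal.ofReal ((2:ℝ) ^ ((j:ℝ)/2) * (w j)⁻¹)) * W := ENNReal.tsum_mul_right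
    _ ≤ 16 * W := mul_le_mul_left hsum W
end
end

section
/- Let n, m ≥ 1 and let γ > 0 and ε > 0. There exists a constant C = C(γ, ε) such that for every measurable function u on ℝ^n × ℝ^m, ‖⟨x⟩^{-γ/2-ε}·u‖_{L²(ℝ^{n+m})} ≤ C · sup_{R>0} ‖⟨x⟩_R^{-γ}·u‖_{L²(ℝ^{n+m})}. -/
open MeasureTheory ENNReal Real

noncomputable section

variable {n m : ℕ}

lemma weight1_core (γ ε : ℝ) (hγ : 0 < γ) (hε : 0 < ε) (j : ℕ) (s : ℝ) (hs0 : 0 ≤ s)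
    (h1 : (2:ℝ)^j ≤ 1 + s) (h2 : 1 + s < 2^(j+1)) :
    (1 + s) ^ ((-(γ/2) - ε)/2) ≤
      (3:ℝ)^(γ/2) * ((2:ℝ)^(-ε/2))^j *
        ((2:ℝ)^((j:ℝ)/2) + s / (2:ℝ)^((j:ℝ)/2)) ^ (-γ/2) := by
  set R : ℝ := (2:ℝ)^((j:ℝ)/2) with hRdef
  have hR : 0 < R := Real.rpow_pos_of_pos two_pos _
  have hRR : R * R = (2:ℝ)^j := by
    rw [hRdef, ← Real.rpow_add two_pos, ← Real.rpow_natCast 2 j]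
    norm_num
  have hsle : s ≤ 2 * (2:ℝ)^j := by
    have : (2:ℝ)^(j+1) = 2 * 2^j := by ring
    nlinarith [pow_pos (two_pos (α := ℝ)) j]
  have hB : R + s / R ≤ 3 * R := by
    have hdiv : s / R ≤ 2 * R := by
      rw [div_le_iff₀ hR]
      nlinarith
    linarith
  have hA0 : 0 < R + s / R := by positivity
  have step1 : ((3:ℝ)*R)^(-γ/2) ≤ (R + s/R)^(-γ/2) :=
    Real.rpow_le_rpow_of_nonpos hA0 hB (by linarith)
  have he : (-(γ/2) - ε)/2 ≤ 0 := by linarith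
  have step2 : (1+s) ^ ((-(γ/2) - ε)/2) ≤ ((2:ℝ)^j) ^ ((-(γ/2) - ε)/2) :=
    Real.rpow_le_rpow_of_nonpos (pow_pos two_pos j) h1 he
  have hmain : ((2:ℝ)^j) ^ ((-(γ/2) - ε)/2)
      = (3:ℝ)^(γ/2) * ((2:ℝ)^(-ε/2))^j * ((3:ℝ)*R)^(-γ/2) := by
    have e1 : ((2:ℝ)^(-ε/2))^j = (2:ℝ)^((-ε/2) * (j:ℝ)) := by
      rw [Real.rpow_mul (by norm_num : (0:ℝ) ≤ 2), Real.rpow_natCast]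
    have e2 : ((3:ℝ)*R)^(-γ/2) = (3:ℝ)^(-γ/2) * (2:ℝ)^((j:ℝ)/2 * (-γ/2)) := by
      rw [Real.mul_rpow (by norm_num) hR.le, hRdef, ← Real.rpow_mul (by norm_num : (0:ℝ) ≤ 2)]
    have e3 : ((2:ℝ)^j) ^ ((-(γ/2) - ε)/2) = (2:ℝ)^((j:ℝ) * ((-(γ/2) - ε)/2)) := by
      rw [Real.rpow_mul (by norm_num : (0:ℝ) ≤ 2), Real.rpow_natCast]
    rw [e1, e2, e3,
      show (3:ℝ)^(γ/2) * (2:ℝ)^((-ε/2) * (j:ℝ)) * ((3:ℝ)^(-γ/2) * (2:ℝ)^((j:ℝ)/2 * (-γ/2)))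
        = ((3:ℝ)^(γ/2) * (3:ℝ)^(-γ/2)) * ((2:ℝ)^((-ε/2) * (j:ℝ)) * (2:ℝ)^((j:ℝ)/2 * (-γ/2)))
        from by ring,
      ← Real.rpow_add (by norm_num : (0:ℝ) < 3), ← Real.rpow_add two_pos]
    norm_num
    rw [show γ/2 + -γ/2 = (0:ℝ) by ring, Real.rpow_zero, one_mul]
    congr 1
    ring
  calc (1+s) ^ ((-(γ/2) - ε)/2) ≤ ((2:ℝ)^j) ^ ((-(γ/2) - ε)/2) := step2
    _ = (3:ℝ)^(γ/2) * ((2:ℝ)^(-ε/2))^j * ((3:ℝ)*R)^(-γ/2) := hmain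
    _ ≤ (3:ℝ)^(γ/2) * ((2:ℝ)^(-ε/2))^j * (R + s/R)^(-γ/2) := by
        have hpos : 0 ≤ (3:ℝ)^(γ/2) * ((2:ℝ)^(-ε/2))^j := by positivity
        exact mul_le_mul_of_nonneg_left step1 hpos


/-- the weight inequality (2.17) of the paper. -/
theorem weight1 (n m : ℕ) (hn : 1 ≤ n) (hm : 1 ≤ m)
    (γ ε : ℝ) (hγ : 0 < γ) (hε : 0 < ε) :
    ∃ C : ℝ≥0∞, C ≠ ⊤ ∧ ∀ u : Pt n m → ℂ, Measurable u →
      eLpNorm (fun p : Pt n m =>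
          ((1 + ‖p.1‖ ^ 2) ^ ((-(γ/2) - ε)/2)) • u p) 2 volume ≤
        C * ⨆ (R : ℝ) (_ : 0 < R),
          eLpNorm (fun p : Pt n m =>
            ((R + ‖p.1‖ ^ 2 / R) ^ (-γ/2)) • u p) 2 volume := by
  classical
  set b : ℝ := (2:ℝ) ^ (-ε/2) with hbdef
  have hb0 : 0 < b := Real.rpow_pos_of_pos two_pos _
  have hb1 : b < 1 := by
    have : (2:ℝ)^(-ε/2) < 2^(0:ℝ) :=
      Real.rpow_lt_rpow_of_exponent_lt one_lt_two (by linarith)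
    simpa [hbdef] using this
  set D : ℝ≥0∞ := (ENNReal.ofReal ((3:ℝ)^(γ/2)))^2 with hDdef
  set r : ℝ≥0∞ := (ENNReal.ofReal b)^2 with hrdef
  have hr1 : r < 1 := by
    have h1 : ENNReal.ofReal b < 1 := by
      rw [← ENNReal.ofReal_one]
      exact ENNReal.ofReal_lt_ofReal_iff_of_nonneg hb0.le |>.mpr hb1
    exact pow_lt_one₀ zero_le h1 two_ne_zero
  have hDne : D ≠ ⊤ := by
    simp [hDdef]
  have hrne : r ≠ ⊤ := hr1.ne_top
  have hgeom : (1 - r)⁻¹ ≠ ⊤ := by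
    rw [ENNReal.inv_ne_top]
    exact (tsub_pos_of_lt hr1).ne'
  refine ⟨(D * (1 - r)⁻¹) ^ ((1:ℝ)/2), ?_, ?_⟩
  · exact ENNReal.rpow_ne_top_of_nonneg (by norm_num) (ENNReal.mul_ne_top hDne hgeom)
  intro u hu
  set M : ℝ≥0∞ := ⨆ (R : ℝ) (_ : 0 < R),
      eLpNorm (fun p : Pt n m =>
        ((R + ‖p.1‖ ^ 2 / R) ^ (-γ/2)) • u p) 2 volume with hMdef
  -- annuli
  set A : ℕ → Set (Pt n m) :=
    fun j => {p : Pt n m | (2:ℝ)^j ≤ 1 + ‖p.1‖^2 ∧ 1 + ‖p.1‖^2 < 2^(j+1)} with hAdef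
  have hcont : Measurable fun p : Pt n m => 1 + ‖p.1‖^2 :=
    (continuous_const.add ((continuous_fst.norm).pow 2)).measurable
  have hAmeas : ∀ j, MeasurableSet (A j) := by
    intro j
    exact (measurableSet_le measurable_const hcont).inter
      (measurableSet_lt hcont measurable_const)
  have hkeylt : ∀ i j : ℕ, i < j → Disjoint (A i) (A j) := by
    intro i j hij
    rw [Set.disjoint_left]
    rintro p ⟨hi1, hi2⟩ ⟨hj1, hj2⟩
    have h2 : (2:ℝ)^(i+1) ≤ 2^j := pow_le_pow_right₀ one_le_two hij
    linarith
  have hAdisj : Pairwise (Function.onFun Disjoint A) := by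
    intro i j hij
    rcases hij.lt_or_gt with h | h
    · exact hkeylt i j h
    · exact (hkeylt j i h).symm
  have hcover : (⋃ j, A j) = Set.univ := by
    ext p
    simp only [Set.mem_iUnion, Set.mem_univ, iff_true, hAdef, Set.mem_setOf_eq]
    have hs0 : (0:ℝ) ≤ ‖p.1‖^2 := sq_nonneg _
    set t : ℝ := 1 + ‖p.1‖^2 with htdef
    have ht1 : 1 ≤ t := by linarith
    have ht0 : 0 < t := by linarith
    refine ⟨⌊Real.logb 2 t⌋₊, ?_, ?_⟩
    · have h1 : (⌊Real.logb 2 t⌋₊ : ℝ) ≤ Real.logb 2 t :=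
        Nat.floor_le (Real.logb_nonneg one_lt_two ht1)
      calc (2:ℝ)^⌊Real.logb 2 t⌋₊ = 2^((⌊Real.logb 2 t⌋₊ : ℝ)) :=
            (Real.rpow_natCast 2 _).symm
        _ ≤ 2 ^ Real.logb 2 t := Real.rpow_le_rpow_of_exponent_le one_le_two h1
        _ = t := Real.rpow_logb two_pos (by norm_num) ht0
    · have h1 : Real.logb 2 t < ⌊Real.logb 2 t⌋₊ + 1 := Nat.lt_floor_add_one _
      calc t = 2 ^ Real.logb 2 t := (Real.rpow_logb two_pos (by norm_num) ht0).symm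
        _ < 2 ^ ((⌊Real.logb 2 t⌋₊ : ℝ) + 1) :=
            Real.rpow_lt_rpow_of_exponent_lt one_lt_two h1
        _ = 2 ^ (⌊Real.logb 2 t⌋₊ + 1) := by
            rw [← Real.rpow_natCast 2 (⌊Real.logb 2 t⌋₊ + 1)]
            push_cast
            ring_nf
  -- pointwise estimate
  have hkey : ∀ (j : ℕ) (p : Pt n m), p ∈ A j →
      ((‖((1 + ‖p.1‖ ^ 2) ^ ((-(γ/2) - ε)/2)) • u p‖₊ : ℝ≥0∞))^(2:ℝ) ≤
        D * r ^ j *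
        ((‖(((2:ℝ)^((j:ℝ)/2) + ‖p.1‖ ^ 2 / (2:ℝ)^((j:ℝ)/2)) ^ (-γ/2)) • u p‖₊ : ℝ≥0∞))^(2:ℝ) := by
    intro j p hp
    obtain ⟨hp1, hp2⟩ := hp
    set R : ℝ := (2:ℝ)^((j:ℝ)/2) with hRdef
    have hR : 0 < R := Real.rpow_pos_of_pos two_pos _
    have hs0 : (0:ℝ) ≤ ‖p.1‖^2 := sq_nonneg _
    have hw0 : (0:ℝ) ≤ (1 + ‖p.1‖ ^ 2) ^ ((-(γ/2) - ε)/2) :=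
      (Real.rpow_pos_of_pos (by linarith) _).le
    have hW0 : (0:ℝ) ≤ (R + ‖p.1‖ ^ 2 / R) ^ (-γ/2) := by positivity
    have hcb : (0:ℝ) ≤ (3:ℝ)^(γ/2) * b^j := by positivity
    have hw : (1 + ‖p.1‖ ^ 2) ^ ((-(γ/2) - ε)/2) ≤
        (3:ℝ)^(γ/2) * b^j * ((R + ‖p.1‖ ^ 2 / R) ^ (-γ/2)) :=
      weight1_core γ ε hγ hε j (‖p.1‖^2) hs0 hp1 hp2
    have h1 : ((‖((1 + ‖p.1‖ ^ 2) ^ ((-(γ/2) - ε)/2)) • u p‖₊ : ℝ≥0∞)) ≤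
        ENNReal.ofReal ((3:ℝ)^(γ/2) * b^j) *
          ((‖((R + ‖p.1‖ ^ 2 / R) ^ (-γ/2)) • u p‖₊ : ℝ≥0∞)) := by
      rw [nnnorm_smul, ENNReal.coe_mul, (by exact Real.enorm_eq_ofReal hw0 : ((‖(1 + ‖p.1‖ ^ 2) ^ ((-(γ/2) - ε)/2)‖₊ : ℝ≥0∞)) = ENNReal.ofReal ((1 + ‖p.1‖ ^ 2) ^ ((-(γ/2) - ε)/2))),
        nnnorm_smul, ENNReal.coe_mul, (by exact Real.enorm_eq_ofReal hW0 : ((‖(R + ‖p.1‖ ^ 2 / R) ^ (-γ/2)‖₊ : ℝ≥0∞)) = ENNReal.ofReal ((R + ‖p.1‖ ^ 2 / R) ^ (-γ/2))), ← mul_assoc,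
        ← ENNReal.ofReal_mul hcb]
      exact mul_le_mul_left (ENNReal.ofReal_le_ofReal hw) _
    calc ((‖((1 + ‖p.1‖ ^ 2) ^ ((-(γ/2) - ε)/2)) • u p‖₊ : ℝ≥0∞))^(2:ℝ)
        ≤ (ENNReal.ofReal ((3:ℝ)^(γ/2) * b^j) *
            ((‖((R + ‖p.1‖ ^ 2 / R) ^ (-γ/2)) • u p‖₊ : ℝ≥0∞)))^(2:ℝ) :=
          ENNReal.rpow_le_rpow h1 (by norm_num)
      _ = (ENNReal.ofReal ((3:ℝ)^(γ/2) * b^j))^(2:ℝ) *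
            ((‖((R + ‖p.1‖ ^ 2 / R) ^ (-γ/2)) • u p‖₊ : ℝ≥0∞))^(2:ℝ) :=
          ENNReal.mul_rpow_of_nonneg _ _ (by norm_num)
      _ = D * r ^ j *
            ((‖((R + ‖p.1‖ ^ 2 / R) ^ (-γ/2)) • u p‖₊ : ℝ≥0∞))^(2:ℝ) := by
          congr 1
          rw [ENNReal.ofReal_mul (by positivity), ENNReal.ofReal_pow hb0.le]
          rw [show ((ENNReal.ofReal ((3:ℝ)^(γ/2)) * ENNReal.ofReal b ^ j) : ℝ≥0∞)^(2:ℝ)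
              = (ENNReal.ofReal ((3:ℝ)^(γ/2)) * ENNReal.ofReal b ^ j)^(2:ℕ) from by
            rw [← ENNReal.rpow_natCast]; norm_num]
          rw [mul_pow, hDdef, hrdef, ← pow_mul, ← pow_mul, Nat.mul_comm j 2]
  -- the squared L² norm formula
  have hsq : ∀ f : Pt n m → ℂ, eLpNorm f 2 volume
      = (∫⁻ p, ((‖f p‖₊ : ℝ≥0∞))^(2:ℝ)) ^ ((1:ℝ)/2) := by
    intro f
    rw [eLpNorm_eq_lintegral_rpow_enorm_toReal two_ne_zero ENNReal.ofNat_ne_top]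
    norm_num
    rfl
  -- the per-annulus bound
  have hj : ∀ j : ℕ, (∫⁻ p in A j,
      ((‖((1 + ‖p.1‖ ^ 2) ^ ((-(γ/2) - ε)/2)) • u p‖₊ : ℝ≥0∞))^(2:ℝ)) ≤
      D * r ^ j * M ^ (2:ℝ) := by
    intro j
    set R : ℝ := (2:ℝ)^((j:ℝ)/2) with hRdef
    have hR : 0 < R := Real.rpow_pos_of_pos two_pos _
    have hDr : D * r ^ j ≠ ⊤ := ENNReal.mul_ne_top hDne (pow_ne_top hrne)
    calc (∫⁻ p in A j,
        ((‖((1 + ‖p.1‖ ^ 2) ^ ((-(γ/2) - ε)/2)) • u p‖₊ : ℝ≥0∞))^(2:ℝ))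
        ≤ ∫⁻ p in A j, D * r ^ j *
            ((‖((R + ‖p.1‖ ^ 2 / R) ^ (-γ/2)) • u p‖₊ : ℝ≥0∞))^(2:ℝ) := by
          refine lintegral_mono_ae ?_
          rw [ae_restrict_iff' (hAmeas j)]
          exact ae_of_all _ (fun p hp => hkey j p hp)
      _ = D * r ^ j * ∫⁻ p in A j,
            ((‖((R + ‖p.1‖ ^ 2 / R) ^ (-γ/2)) • u p‖₊ : ℝ≥0∞))^(2:ℝ) :=
          lintegral_const_mul' _ _ hDr
      _ ≤ D * r ^ j * ∫⁻ p,
            ((‖((R + ‖p.1‖ ^ 2 / R) ^ (-γ/2)) • u p‖₊ : ℝ≥0∞))^(2:ℝ) :=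
          mul_le_mul_right (setLIntegral_le_lintegral _ _) _
      _ = D * r ^ j *
            (eLpNorm (fun p : Pt n m =>
              ((R + ‖p.1‖ ^ 2 / R) ^ (-γ/2)) • u p) 2 volume) ^ (2:ℝ) := by
          rw [hsq, ← ENNReal.rpow_mul]
          norm_num
      _ ≤ D * r ^ j * M ^ (2:ℝ) := by
          refine mul_le_mul_right (ENNReal.rpow_le_rpow ?_ (by norm_num)) _
          rw [hMdef]
          exact le_iSup₂ (f := fun (R : ℝ) (_ : 0 < R) =>
            eLpNorm (fun p : Pt n m =>
              ((R + ‖p.1‖ ^ 2 / R) ^ (-γ/2)) • u p) 2 volume) R hR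
  -- put it together
  rw [hsq]
  have hsplit : (∫⁻ p, ((‖((1 + ‖p.1‖ ^ 2) ^ ((-(γ/2) - ε)/2)) • u p‖₊ : ℝ≥0∞))^(2:ℝ))
      = ∑' j : ℕ, ∫⁻ p in A j,
          ((‖((1 + ‖p.1‖ ^ 2) ^ ((-(γ/2) - ε)/2)) • u p‖₊ : ℝ≥0∞))^(2:ℝ) := by
    rw [← lintegral_iUnion hAmeas hAdisj, hcover, Measure.restrict_univ]
  rw [hsplit]
  have hsum : (∑' j : ℕ, ∫⁻ p in A j,
      ((‖((1 + ‖p.1‖ ^ 2) ^ ((-(γ/2) - ε)/2)) • u p‖₊ : ℝ≥0∞))^(2:ℝ))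
      ≤ D * (1 - r)⁻¹ * M ^ (2:ℝ) := by
    calc (∑' j : ℕ, ∫⁻ p in A j,
        ((‖((1 + ‖p.1‖ ^ 2) ^ ((-(γ/2) - ε)/2)) • u p‖₊ : ℝ≥0∞))^(2:ℝ))
        ≤ ∑' j : ℕ, D * r ^ j * M ^ (2:ℝ) := ENNReal.tsum_le_tsum hj
      _ = D * M ^ (2:ℝ) * ∑' j : ℕ, r ^ j := by
          rw [← ENNReal.tsum_mul_left]
          congr 1
          ext j
          ring
      _ = D * (1 - r)⁻¹ * M ^ (2:ℝ) := by
          rw [ENNReal.tsum_geometric]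
          ring
  calc (∑' j : ℕ, ∫⁻ p in A j,
      ((‖((1 + ‖p.1‖ ^ 2) ^ ((-(γ/2) - ε)/2)) • u p‖₊ : ℝ≥0∞))^(2:ℝ)) ^ ((1:ℝ)/2)
      ≤ (D * (1 - r)⁻¹ * M ^ (2:ℝ)) ^ ((1:ℝ)/2) :=
        ENNReal.rpow_le_rpow hsum (by norm_num)
    _ = (D * (1 - r)⁻¹) ^ ((1:ℝ)/2) * M := by
        rw [ENNReal.mul_rpow_of_nonneg _ _ (by norm_num : (0:ℝ) ≤ 1/2),
          ← ENNReal.rpow_mul]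
        norm_num
end
end
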